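/- arXiv:2406.10781 — 5 statements merged into one kernel-verified Lean document; each statement's English description precedes it below -/
import Mathlib

section
/- For a compact nonempty set K ⊂ R^1 (the real line) and p ≤ -1, the Riesz p-capacity equals exactly Cap_p(K) = 2^{1/p}·diam(K). -/
open MeasureTheory ENNReal

/-- Riesz `p`-energy for `p < 0` of a subset of the real line: the supremum over
probability measures supported on `K` of the double integral of `|x-y|^{-p}`. -/
noncomputable def rieszVneg (p : ℝ) (K : Set ℝ) : ℝ≥0∞ :=
  ⨆ (μ : Measure ℝ) (_ : IsProbabilityMeasure μ) (_ : μ Kᶜ = 0),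
    ∫⁻ x, ∫⁻ y, edist x y ^ (-p) ∂μ ∂μ

/-- Riesz `p`-capacity for `p < 0`. -/
noncomputable def capNeg (p : ℝ) (K : Set ℝ) : ℝ≥0∞ :=
  rieszVneg p K ^ (-1 / p)

section Aux
open NNReal Set


noncomputable def kern (x y t : ℝ) : ℝ≥0∞ := (Ico x y ∪ Ico y x).indicator 1 t

lemma kern_meas {α : Type*} [MeasurableSpace α] {X Y T : α → ℝ}
    (hX : Measurable X) (hY : Measurable Y) (hT : Measurable T) :
    Measurable fun a => kern (X a) (Y a) (T a) := by
  have h : (fun a => kern (X a) (Y a) (T a)) =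
      ({a | X a ≤ T a ∧ T a < Y a} ∪ {a | Y a ≤ T a ∧ T a < X a}).indicator 1 := by
    ext a
    by_cases h : (X a ≤ T a ∧ T a < Y a) ∨ (Y a ≤ T a ∧ T a < X a) <;>
      simp [kern, Set.indicator_apply, Set.mem_Ico, Set.mem_union, Set.mem_setOf_eq, h]
  rw [h]
  exact measurable_const.indicator
    (((measurableSet_le hX hT).inter (measurableSet_lt hT hY)).union
     ((measurableSet_le hY hT).inter (measurableSet_lt hT hX)))

lemma prod_quarter {a b : ℝ≥0∞} (h : a + b = 1) : a * b ≤ 4⁻¹ := by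
  have ha : a ≠ ⊤ := by intro h'; simp [h'] at h
  have hb : b ≠ ⊤ := by intro h'; simp [h'] at h
  lift a to ℝ≥0 using ha
  lift b to ℝ≥0 using hb
  have hab : (a : ℝ) + (b : ℝ) = 1 := by exact_mod_cast h
  have hr : (a : ℝ) * (b : ℝ) ≤ 4⁻¹ := by nlinarith [mul_self_nonneg ((a:ℝ) - (b:ℝ))]
  have hq : a * b ≤ (4⁻¹ : ℝ≥0) := by
    rw [← NNReal.coe_le_coe]; push_cast; exact hr
  calc (a:ℝ≥0∞) * b = ((a*b : ℝ≥0) : ℝ≥0∞) := by push_cast; ring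
    _ ≤ ((4⁻¹ : ℝ≥0) : ℝ≥0∞) := by exact_mod_cast hq
    _ = 4⁻¹ := by simp

lemma slice_le (μ : Measure ℝ) [IsProbabilityMeasure μ] (t : ℝ) :
    ∫⁻ x, ∫⁻ y, kern x y t ∂μ ∂μ ≤ 2⁻¹ := by
  have hinner : ∀ x, ∫⁻ y, kern x y t ∂μ =
      if x ≤ t then μ (Ioi t) else μ (Iic t) := by
    intro x
    rcases le_or_gt x t with h | h
    · rw [if_pos h]
      have hk : ∀ y, kern x y t = (Ioi t).indicator 1 y := by
        intro y
        have hnx : ¬ t < x := not_lt.2 h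
        by_cases hy : t < y <;>
          simp [kern, Set.indicator_apply, Set.mem_union, Set.mem_Ico, Set.mem_Ioi, h, hy, hnx]
      simp only [hk]
      rw [lintegral_indicator_one measurableSet_Ioi]
    · rw [if_neg (not_le.2 h)]
      have hk : ∀ y, kern x y t = (Iic t).indicator 1 y := by
        intro y
        have hnx : ¬ x ≤ t := not_le.2 h
        by_cases hy : y ≤ t <;>
          simp [kern, Set.indicator_apply, Set.mem_union, Set.mem_Ico, Set.mem_Iic, h, hy, hnx]
      simp only [hk]
      rw [lintegral_indicator_one measurableSet_Iic]
  simp only [hinner]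
  have hsplit : ∫⁻ x, (if x ≤ t then μ (Ioi t) else μ (Iic t)) ∂μ
      = μ (Ioi t) * μ (Iic t) + μ (Iic t) * μ (Ioi t) := by
    rw [← lintegral_add_compl (fun x => if x ≤ t then μ (Ioi t) else μ (Iic t))
      (measurableSet_Iic (a := t))]
    have h1 : ∫⁻ x in Iic t, (if x ≤ t then μ (Ioi t) else μ (Iic t)) ∂μ
        = μ (Ioi t) * μ (Iic t) := by
      rw [setLIntegral_congr_fun measurableSet_Iic
        (fun x (hx : x ∈ Iic t) => if_pos (show x ≤ t from hx) :
          EqOn (fun x => if x ≤ t then μ (Ioi t) else μ (Iic t)) (fun _ => μ (Ioi t)) (Iic t))]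
      simp [setLIntegral_const]
    have h2 : ∫⁻ x in (Iic t)ᶜ, (if x ≤ t then μ (Ioi t) else μ (Iic t)) ∂μ
        = μ (Iic t) * μ (Ioi t) := by
      rw [setLIntegral_congr_fun measurableSet_Iic.compl
        (fun x (hx : x ∈ (Iic t)ᶜ) => if_neg (show ¬ x ≤ t from hx) :
          EqOn (fun x => if x ≤ t then μ (Ioi t) else μ (Iic t)) (fun _ => μ (Iic t)) (Iic t)ᶜ)]
      simp [setLIntegral_const, compl_Iic]
    rw [h1, h2]
  rw [hsplit]
  have hone : μ (Iic t) + μ (Ioi t) = 1 := by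
    rw [← compl_Iic]
    rw [measure_add_measure_compl measurableSet_Iic]
    exact measure_univ
  have := prod_quarter hone
  calc μ (Ioi t) * μ (Iic t) + μ (Iic t) * μ (Ioi t)
      = 2 * (μ (Iic t) * μ (Ioi t)) := by ring
    _ ≤ 2 * 4⁻¹ := by exact mul_le_mul_right (prod_quarter hone) 2
    _ = 2⁻¹ := by
        rw [show (4 : ℝ≥0∞) = 2 * 2 by norm_num, ENNReal.mul_inv (by norm_num) (by norm_num)]
        rw [← mul_assoc, ENNReal.mul_inv_cancel (by norm_num) (by norm_num), one_mul]

lemma edist_eq_kern {a b x y : ℝ} (hx : x ∈ Icc a b) (hy : y ∈ Icc a b) :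
    edist x y = ∫⁻ t in Icc a b, kern x y t := by
  have hsub : Ico x y ∪ Ico y x ⊆ Icc a b := by
    apply union_subset
    · exact (Ico_subset_Icc_self).trans (Icc_subset_Icc hx.1 hy.2)
    · exact (Ico_subset_Icc_self).trans (Icc_subset_Icc hy.1 hx.2)
  have hmeas : MeasurableSet (Ico x y ∪ Ico y x) :=
    measurableSet_Ico.union measurableSet_Ico
  rw [show (fun t => kern x y t) = (Ico x y ∪ Ico y x).indicator 1 from rfl]
  rw [lintegral_indicator_one hmeas]
  rw [Measure.restrict_apply hmeas, inter_eq_left.2 hsub]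
  rcases le_total x y with h | h
  · rw [Ico_eq_empty (not_lt.2 h), union_empty, Real.volume_Ico, edist_dist,
      Real.dist_eq, abs_sub_comm, abs_of_nonneg (by linarith)]
  · rw [Ico_eq_empty (not_lt.2 h), empty_union, Real.volume_Ico, edist_dist,
      Real.dist_eq, abs_of_nonneg (by linarith)]

lemma dist_energy_le (μ : Measure ℝ) [IsProbabilityMeasure μ] (a b : ℝ)
    (hμ : ∀ᵐ x ∂μ, x ∈ Icc a b) :
    ∫⁻ x, ∫⁻ y, edist x y ∂μ ∂μ ≤ 2⁻¹ * ENNReal.ofReal (b - a) := by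
  set ν := volume.restrict (Icc a b) with hν
  have step1 : ∫⁻ x, ∫⁻ y, edist x y ∂μ ∂μ
      = ∫⁻ x, ∫⁻ t, ∫⁻ y, kern x y t ∂μ ∂ν ∂μ := by
    apply lintegral_congr_ae
    filter_upwards [hμ] with x hx
    have : ∫⁻ y, edist x y ∂μ = ∫⁻ y, ∫⁻ t, kern x y t ∂ν ∂μ := by
      apply lintegral_congr_ae
      filter_upwards [hμ] with y hy
      exact edist_eq_kern hx hy
    rw [this]
    exact lintegral_lintegral_swap
      ((kern_meas measurable_const measurable_fst measurable_snd).aemeasurable)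
  have step2 : ∫⁻ x, ∫⁻ t, ∫⁻ y, kern x y t ∂μ ∂ν ∂μ
      = ∫⁻ t, ∫⁻ x, ∫⁻ y, kern x y t ∂μ ∂μ ∂ν := by
    apply lintegral_lintegral_swap
    have : Measurable fun p : ℝ × ℝ => ∫⁻ y, kern p.1 y p.2 ∂μ := by
      exact Measurable.lintegral_prod_right'
        (f := fun q : (ℝ × ℝ) × ℝ => kern q.1.1 q.2 q.1.2)
        (kern_meas (measurable_fst.fst) measurable_snd (measurable_fst.snd))
    exact this.aemeasurable
  rw [step1, step2]
  calc ∫⁻ t, ∫⁻ x, ∫⁻ y, kern x y t ∂μ ∂μ ∂ν ≤ ∫⁻ _, 2⁻¹ ∂ν :=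
        lintegral_mono fun t => slice_le μ t
    _ = 2⁻¹ * ENNReal.ofReal (b - a) := by
        rw [lintegral_const, hν, Measure.restrict_apply_univ, Real.volume_Icc]

lemma lint_two_point (a b : ℝ) (h : ℝ → ℝ≥0∞) (hh : Measurable h) :
    ∫⁻ y, h y ∂((2 : ℝ≥0∞)⁻¹ • (Measure.dirac a + Measure.dirac b))
      = 2⁻¹ * (h a + h b) := by
  rw [lintegral_smul_measure, lintegral_add_measure, lintegral_dirac' _ hh,
    lintegral_dirac' _ hh, smul_eq_mul]

lemma rieszVneg_eq (K : Set ℝ) (hK : IsCompact K) (hne : K.Nonempty)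
    (p : ℝ) (hp : p ≤ -1) :
    rieszVneg p K = 2⁻¹ * (EMetric.diam K) ^ (-p) := by
  set s : ℝ := -p with hs
  have hs1 : 1 ≤ s := by simp [hs]; linarith
  have hs0 : 0 < s := by linarith
  set a : ℝ := sInf K with ha'
  set b : ℝ := sSup K with hb'
  have ha : a ∈ K := hK.sInf_mem hne
  have hb : b ∈ K := hK.sSup_mem hne
  have hsub : K ⊆ Icc a b := fun x hx =>
    ⟨csInf_le hK.bddBelow hx, le_csSup hK.bddAbove hx⟩
  have hab : a ≤ b := (hsub ha).2
  have hd : EMetric.diam K = ENNReal.ofReal (b - a) := Real.ediam_eq hK.isBounded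
  set d : ℝ≥0∞ := ENNReal.ofReal (b - a) with hd'
  have hdt : d ≠ ⊤ := ofReal_ne_top
  have hedab : edist a b = d := by
    rw [edist_dist, Real.dist_eq, abs_sub_comm, abs_of_nonneg (by linarith)]
  rw [hd]
  apply le_antisymm
  · -- upper bound
    apply iSup_le; intro μ; apply iSup_le; intro hprob; apply iSup_le; intro hsupp
    haveI := hprob
    have hae : ∀ᵐ x ∂μ, x ∈ Icc a b := by
      rw [ae_iff]
      refine measure_mono_null ?_ hsupp
      intro x hx
      exact fun hxK => hx (hsub hxK)
    have hpt : ∀ x ∈ Icc a b, ∀ y ∈ Icc a b,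
        edist x y ^ s ≤ d ^ (s - 1) * edist x y := by
      intro x hx y hy
      have hele : edist x y ≤ d := by
        rw [edist_dist, Real.dist_eq]
        apply ENNReal.ofReal_le_ofReal
        rw [abs_sub_le_iff]
        constructor <;> [skip; skip] <;>
          · obtain ⟨hx1, hx2⟩ := hx; obtain ⟨hy1, hy2⟩ := hy; linarith
      calc edist x y ^ s = edist x y ^ (s - 1) * edist x y ^ (1 : ℝ) := by
            rw [← ENNReal.rpow_add_of_nonneg _ _ (by linarith) zero_le_one]
            norm_num
        _ ≤ d ^ (s - 1) * edist x y := by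
            rw [ENNReal.rpow_one]
            exact mul_le_mul_left (ENNReal.rpow_le_rpow hele (by linarith)) _
    calc ∫⁻ x, ∫⁻ y, edist x y ^ (-p) ∂μ ∂μ
        ≤ ∫⁻ x, ∫⁻ y, d ^ (s - 1) * edist x y ∂μ ∂μ := by
          apply lintegral_mono_ae
          filter_upwards [hae] with x hx
          apply lintegral_mono_ae
          filter_upwards [hae] with y hy
          exact hpt x hx y hy
      _ = d ^ (s - 1) * ∫⁻ x, ∫⁻ y, edist x y ∂μ ∂μ := by
          have h1 : ∀ x, ∫⁻ y, d ^ (s-1) * edist x y ∂μ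
              = d ^ (s-1) * ∫⁻ y, edist x y ∂μ := fun x =>
            lintegral_const_mul' _ _ (ENNReal.rpow_ne_top_of_nonneg (by linarith) hdt)
          simp only [h1]
          exact lintegral_const_mul' _ _ (ENNReal.rpow_ne_top_of_nonneg (by linarith) hdt)
      _ ≤ d ^ (s - 1) * (2⁻¹ * d) := by
          exact mul_le_mul_right (dist_energy_le μ a b hae) _
      _ = 2⁻¹ * d ^ s := by
          rw [show d ^ (s-1) * (2⁻¹ * d) = 2⁻¹ * (d ^ (s-1) * d ^ (1:ℝ)) by
            rw [ENNReal.rpow_one]; ring]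
          rw [← ENNReal.rpow_add_of_nonneg _ _ (by linarith) zero_le_one]
          norm_num
  · -- lower bound
    set μ₀ : Measure ℝ := (2 : ℝ≥0∞)⁻¹ • (Measure.dirac a + Measure.dirac b) with hμ₀
    have hprob : IsProbabilityMeasure μ₀ := by
      constructor
      rw [hμ₀]
      simp only [Measure.smul_apply, Measure.add_apply, measure_univ, smul_eq_mul]
      rw [one_add_one_eq_two, ENNReal.inv_mul_cancel (by norm_num) (by norm_num)]
    have hsupp : μ₀ Kᶜ = 0 := by
      rw [hμ₀]
      have hKm : MeasurableSet Kᶜ := hK.isClosed.measurableSet.compl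
      simp only [Measure.smul_apply, Measure.add_apply, Measure.dirac_apply' _ hKm,
        indicator_of_notMem (fun h => h ha : a ∉ Kᶜ),
        indicator_of_notMem (fun h => h hb : b ∉ Kᶜ), add_zero, mul_zero, smul_eq_mul]
    have hmeas1 : ∀ c : ℝ, Measurable fun x : ℝ => edist x c ^ s := by
      intro c
      exact (measurable_id.edist measurable_const).pow_const _
    have hinner : ∀ x, ∫⁻ y, edist x y ^ (-p) ∂μ₀
        = 2⁻¹ * (edist x a ^ s + edist x b ^ s) := by
      intro x
      rw [← hs] at *
      exact lint_two_point a b _ ((measurable_const.edist measurable_id).pow_const _)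
    have henergy : ∫⁻ x, ∫⁻ y, edist x y ^ (-p) ∂μ₀ ∂μ₀ = 2⁻¹ * d ^ s := by
      rw [lintegral_congr hinner]
      rw [lint_two_point a b _ (by
        exact (measurable_const.mul ((hmeas1 a).add (hmeas1 b))))]
      rw [edist_self, edist_self, ENNReal.zero_rpow_of_pos hs0, edist_comm b a, hedab]
      rw [zero_add, add_zero]
      rw [show (2:ℝ≥0∞)⁻¹ * (2⁻¹ * d ^ s + 2⁻¹ * d ^ s) = 2⁻¹ * d ^ s by
        rw [← two_mul, ← mul_assoc, ← mul_assoc,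
          ENNReal.inv_mul_cancel (by norm_num) (by norm_num), one_mul]]
    calc 2⁻¹ * d ^ s = ∫⁻ x, ∫⁻ y, edist x y ^ (-p) ∂μ₀ ∂μ₀ := henergy.symm
      _ ≤ rieszVneg p K := by
          rw [rieszVneg]
          apply le_iSup_of_le μ₀
          rw [iSup_pos hprob, iSup_pos hsupp]

end Aux

section Main
open NNReal Set

/-- For compact nonempty `K ⊆ ℝ` and `p ≤ -1`,
`Cap_p(K) = 2^{1/p}·diam(K)` exactly. -/
theorem capNeg_eq_of_dim_one (K : Set ℝ) (hK : IsCompact K) (hne : K.Nonempty)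
    (p : ℝ) (hp : p ≤ -1) :
    capNeg p K = (2 : ℝ≥0∞) ^ (1 / p) * EMetric.diam K := by
  set s : ℝ := -p with hs
  have hs0 : 0 < s := by simp only [hs]; linarith
  set D : ℝ≥0∞ := EMetric.diam K with hD
  have hDt : D ≠ ⊤ := hK.isBounded.ediam_ne_top
  have hexp : -1 / p = 1 / s := by rw [hs, div_neg, neg_div]
  have hexp2 : 1 / p = -(1 / s) := by rw [hs, div_neg, neg_neg]
  rw [capNeg, rieszVneg_eq K hK hne p hp, hexp, ← hD, ← hs]
  rw [ENNReal.mul_rpow_of_ne_top (by norm_num) (ENNReal.rpow_ne_top_of_nonneg hs0.le hDt)]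
  rw [← ENNReal.rpow_mul D s (1 / s), mul_one_div_cancel hs0.ne', ENNReal.rpow_one]
  rw [ENNReal.inv_rpow, ← ENNReal.rpow_neg, ← hexp2]

end Main
end

section
/- For the interval [-1,1] ⊂ R and p ≤ -1, the measure μ = (δ_{-1} + δ_{1})/2 maximizes ∫∫ |x-y|^{-p} dμdμ over all probability measures on [-1,1], and the maximum value is 2^{-p-1}; hence Cap_p([-1,1]) = 2^{1+1/p}. -/
open MeasureTheory ENNReal

/-- The two-point measure `(δ_{-1} + δ_{1})/2` on the real line. -/
noncomputable def twoPointMeasure : Measure ℝ :=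
  (2 : ℝ≥0∞)⁻¹ • (Measure.dirac (-1 : ℝ) + Measure.dirac (1 : ℝ))

lemma real_key (q x y : ℝ) (hq : 1 ≤ q) (hx : x ∈ Set.Icc (-1:ℝ) 1) (hy : y ∈ Set.Icc (-1:ℝ) 1) :
    |x - y| ^ q ≤ 2 ^ (q-1) * (1 - x*y) := by
  obtain ⟨hx1, hx2⟩ := hx
  obtain ⟨hy1, hy2⟩ := hy
  have h1 : |x - y| ≤ 1 - x*y := by
    rw [abs_le]; constructor <;> nlinarith [mul_nonneg (sub_nonneg.2 hx2) (sub_nonneg.2 hy2)]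
  have h0 : (0:ℝ) ≤ |x - y| := abs_nonneg _
  rcases eq_or_lt_of_le h0 with h|h
  · rw [← h, Real.zero_rpow (by linarith)]
    have : (0:ℝ) ≤ 1 - x*y := le_trans h0 h1
    positivity
  · have h2 : |x - y| ^ q = |x - y| ^ (q-1) * |x - y| := by
      nth_rewrite 3 [← Real.rpow_one (|x-y|)]
      rw [← Real.rpow_add h]; ring_nf
    rw [h2]
    have h3 : |x - y| ^ (q-1) ≤ 2 ^ (q-1) :=
      Real.rpow_le_rpow h0 (abs_sub_le_iff.2 ⟨by linarith, by linarith⟩) (by linarith)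
    exact mul_le_mul h3 h1 h0 (by positivity)

lemma enn_key (q x y : ℝ) (hq : 1 ≤ q) (hx : x ∈ Set.Icc (-1:ℝ) 1) (hy : y ∈ Set.Icc (-1:ℝ) 1) :
    edist x y ^ q ≤ (2:ℝ≥0∞) ^ (q-2) *
      (ENNReal.ofReal (1-x) * ENNReal.ofReal (1+y) + ENNReal.ofReal (1+x) * ENNReal.ofReal (1-y)) := by
  obtain ⟨hx1, hx2⟩ := hx
  obtain ⟨hy1, hy2⟩ := hy
  have hL : edist x y ^ q = ENNReal.ofReal (|x - y| ^ q) := by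
    rw [edist_dist, Real.dist_eq, ← ENNReal.ofReal_rpow_of_nonneg (abs_nonneg _) (by linarith)]
  have hc : (2:ℝ≥0∞) ^ (q-2) = ENNReal.ofReal (2 ^ (q-2)) := by
    rw [← ENNReal.ofReal_rpow_of_pos (by norm_num)]
    norm_num
  have hR : (2:ℝ≥0∞) ^ (q-2) *
      (ENNReal.ofReal (1-x) * ENNReal.ofReal (1+y) + ENNReal.ofReal (1+x) * ENNReal.ofReal (1-y))
      = ENNReal.ofReal (2 ^ (q-2) * ((1-x)*(1+y) + (1+x)*(1-y))) := by
    rw [hc, ← ENNReal.ofReal_mul (by linarith), ← ENNReal.ofReal_mul (by linarith),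
      ← ENNReal.ofReal_add (by nlinarith) (by nlinarith), ← ENNReal.ofReal_mul (by positivity)]
  rw [hL, hR]
  apply ENNReal.ofReal_le_ofReal
  have := real_key q x y hq ⟨hx1, hx2⟩ ⟨hy1, hy2⟩
  have h2 : (2:ℝ) ^ (q-1) = 2 ^ (q-2) * 2 := by
    rw [show q-1 = (q-2)+1 by ring, Real.rpow_add (by norm_num), Real.rpow_one]
  calc |x - y| ^ q ≤ 2 ^ (q-1) * (1 - x*y) := this
    _ = 2 ^ (q-2) * ((1-x)*(1+y) + (1+x)*(1-y)) := by rw [h2]; ring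

lemma energy_le (q : ℝ) (hq : 1 ≤ q) (ν : Measure ℝ) [IsProbabilityMeasure ν]
    (hν : ν (Set.Icc (-1:ℝ) 1)ᶜ = 0) :
    ∫⁻ x, ∫⁻ y, edist x y ^ q ∂ν ∂ν ≤ (2:ℝ≥0∞) ^ (q-1) := by
  set A : ℝ → ℝ≥0∞ := fun t => ENNReal.ofReal (1 - t) with hA
  set B : ℝ → ℝ≥0∞ := fun t => ENNReal.ofReal (1 + t) with hB
  have mA : Measurable A := (measurable_const.sub measurable_id).ennreal_ofReal
  have mB : Measurable B := (measurable_const.add measurable_id).ennreal_ofReal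
  set a : ℝ≥0∞ := ∫⁻ t, A t ∂ν with ha
  set b : ℝ≥0∞ := ∫⁻ t, B t ∂ν with hb
  set c : ℝ≥0∞ := (2:ℝ≥0∞) ^ (q-2) with hc
  have hae : ∀ᵐ x ∂ν, x ∈ Set.Icc (-1:ℝ) 1 := by
    rw [ae_iff]
    have : {a : ℝ | ¬ a ∈ Set.Icc (-1:ℝ) 1} = (Set.Icc (-1:ℝ) 1)ᶜ := rfl
    rw [this]; exact hν
  have step1 : ∫⁻ x, ∫⁻ y, edist x y ^ q ∂ν ∂ν
      ≤ ∫⁻ x, ∫⁻ y, c * (A x * B y + B x * A y) ∂ν ∂ν := by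
    refine lintegral_mono_ae ?_
    filter_upwards [hae] with x hx
    refine lintegral_mono_ae ?_
    filter_upwards [hae] with y hy
    exact enn_key q x y hq hx hy
  have inner : ∀ x : ℝ, ∫⁻ y, c * (A x * B y + B x * A y) ∂ν = c * (A x * b + B x * a) := by
    intro x
    rw [lintegral_const_mul _ (show Measurable fun y => A x * B y + B x * A y from (mB.const_mul _).add (mA.const_mul _))]
    rw [lintegral_add_left (mB.const_mul _)]
    rw [lintegral_const_mul _ mB, lintegral_const_mul _ mA]
  have outer : ∫⁻ x, c * (A x * b + B x * a) ∂ν = c * (a * b + b * a) := by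
    rw [lintegral_const_mul _ (show Measurable fun x => A x * b + B x * a from (mA.mul_const _).add (mB.mul_const _))]
    rw [lintegral_add_left (mA.mul_const _)]
    rw [lintegral_mul_const _ mA, lintegral_mul_const _ mB]
  have hab : a + b = 2 := by
    rw [ha, hb, ← lintegral_add_left mA]
    have : ∫⁻ t, A t + B t ∂ν = ∫⁻ _, (2:ℝ≥0∞) ∂ν := by
      refine lintegral_congr_ae ?_
      filter_upwards [hae] with t ⟨ht1, ht2⟩
      rw [hA, hB]
      simp only
      rw [← ENNReal.ofReal_add (by linarith) (by linarith)]
      norm_num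
    rw [this, lintegral_const, measure_univ, mul_one]
  have haf : a ≠ ⊤ := ne_top_of_le_ne_top ENNReal.ofNat_ne_top (hab ▸ le_self_add)
  have hbf : b ≠ ⊤ := ne_top_of_le_ne_top ENNReal.ofNat_ne_top (hab ▸ le_add_self)
  have hab1 : a * b ≤ 1 := by
    have h2 : a.toReal + b.toReal = 2 := by
      rw [← ENNReal.toReal_add haf hbf, hab]; norm_num
    have h3 : a.toReal * b.toReal ≤ 1 := by
      nlinarith [sq_nonneg (a.toReal - b.toReal)]
    calc a * b = ENNReal.ofReal (a.toReal * b.toReal) := by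
          rw [ENNReal.ofReal_mul ENNReal.toReal_nonneg, ENNReal.ofReal_toReal haf,
            ENNReal.ofReal_toReal hbf]
      _ ≤ 1 := by simpa using ENNReal.ofReal_le_ofReal h3
  calc ∫⁻ x, ∫⁻ y, edist x y ^ q ∂ν ∂ν
      ≤ ∫⁻ x, ∫⁻ y, c * (A x * B y + B x * A y) ∂ν ∂ν := step1
    _ = c * (a * b + b * a) := by simp_rw [inner]; exact outer
    _ ≤ c * (1 + 1) := by
        gcongr
        · rw [mul_comm]; exact hab1
    _ = (2:ℝ≥0∞) ^ (q-1) := by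
        rw [show q - 1 = (q-2) + 1 by ring, ENNReal.rpow_add _ _ (by norm_num) (by norm_num)]
        norm_num
        rw [hc]

instance : IsProbabilityMeasure twoPointMeasure := by
  constructor
  simp [twoPointMeasure]
  rw [ENNReal.inv_two_add_inv_two]

lemma twoPoint_lintegral (f : ℝ → ℝ≥0∞) :
    ∫⁻ x, f x ∂twoPointMeasure = 2⁻¹ * (f (-1) + f 1) := by
  simp [twoPointMeasure, lintegral_smul_measure, lintegral_add_measure, lintegral_dirac]
  rw [mul_add]

lemma twoPoint_energy (q : ℝ) (hq : 0 < q) :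
    ∫⁻ x, ∫⁻ y, edist x y ^ q ∂twoPointMeasure ∂twoPointMeasure = (2:ℝ≥0∞) ^ (q - 1) := by
  rw [twoPoint_lintegral, twoPoint_lintegral, twoPoint_lintegral]
  have h0 : ∀ x : ℝ, edist x x ^ q = 0 := by
    intro x; rw [edist_self, ENNReal.zero_rpow_of_pos hq]
  have h2 : edist (-1:ℝ) 1 ^ q = 2 ^ q := by
    rw [edist_dist, Real.dist_eq]
    norm_num
  have h2' : edist (1:ℝ) (-1) ^ q = 2 ^ q := by
    rw [edist_comm]; exact h2
  rw [h0, h2, h2', h0, zero_add, add_zero, ← two_mul, ← mul_assoc,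
    ENNReal.inv_mul_cancel (by norm_num) (by norm_num), one_mul,
    show q - 1 = -1 + q by ring, ENNReal.rpow_add _ _ (by norm_num) (by norm_num),
    ENNReal.rpow_neg_one]

lemma twoPoint_supp : twoPointMeasure (Set.Icc (-1:ℝ) 1)ᶜ = 0 := by
  have h1 : (-1:ℝ) ∈ Set.Icc (-1:ℝ) 1 := by norm_num
  have h2 : (1:ℝ) ∈ Set.Icc (-1:ℝ) 1 := by norm_num
  simp [twoPointMeasure, Measure.dirac_apply' _ measurableSet_Icc.compl, h1, h2]

/-- For `p ≤ -1`, the measure `(δ_{-1}+δ_{1})/2` maximizes the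
`p`-energy `∫∫ |x-y|^{-p} dμdμ` over probability measures on `[-1,1]`; the maximum
value is `2^{-p-1}`, and hence `Cap_p([-1,1]) = 2^{1+1/p}`. -/
theorem twoPoint_maximizes (p : ℝ) (hp : p ≤ -1) :
    (∀ ν : Measure ℝ, IsProbabilityMeasure ν → ν (Set.Icc (-1 : ℝ) 1)ᶜ = 0 →
      (∫⁻ x, ∫⁻ y, edist x y ^ (-p) ∂ν ∂ν)
        ≤ ∫⁻ x, ∫⁻ y, edist x y ^ (-p) ∂twoPointMeasure ∂twoPointMeasure) ∧
    (∫⁻ x, ∫⁻ y, edist x y ^ (-p) ∂twoPointMeasure ∂twoPointMeasure)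
      = (2 : ℝ≥0∞) ^ (-p - 1) ∧
    capNeg p (Set.Icc (-1 : ℝ) 1) = (2 : ℝ≥0∞) ^ (1 + 1 / p) := by
  have hq : 1 ≤ -p := by linarith
  have hE : (∫⁻ x, ∫⁻ y, edist x y ^ (-p) ∂twoPointMeasure ∂twoPointMeasure)
      = (2 : ℝ≥0∞) ^ (-p - 1) := twoPoint_energy (-p) (by linarith)
  refine ⟨?_, hE, ?_⟩
  · intro ν hν hν2
    rw [hE]
    exact energy_le (-p) hq ν hν2
  · have hV : rieszVneg p (Set.Icc (-1 : ℝ) 1) = (2 : ℝ≥0∞) ^ (-p - 1) := by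
      apply le_antisymm
      · refine iSup_le fun μ => iSup_le fun hμ => iSup_le fun hμ2 => ?_
        exact energy_le (-p) hq μ hμ2
      · rw [← hE]
        exact le_iSup_of_le twoPointMeasure (le_iSup_of_le inferInstance
          (le_iSup_of_le twoPoint_supp le_rfl))
    rw [capNeg, hV, ← ENNReal.rpow_mul,
      show (-p - 1) * (-1 / p) = 1 + 1 / p by
        have hp0 : p ≠ 0 := by intro h; rw [h] at hp; norm_num at hp
        field_simp; ring]
end

section
/- Left-continuity of Riesz energy from below via truncation: let K ⊂ R^n be compact nonempty, q > 0, and let (p_j) be a sequence of positive reals with p_j → q. Suppose μ_j are probability measures on K with ∫∫|x-y|^{-p_j} dμ_j dμ_j = V_{p_j}(K), and μ_j converges weak-* to a probability measure μ. Then V_q(K) ≤ ∫∫ |x-y|^{-q} dμ dμ ≤ liminf_{j→∞} V_{p_j}(K). -/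
open MeasureTheory ENNReal Filter Topology
open NNReal BoundedContinuousFunction

section AuxRiesz

private lemma aux_real_bound {q e B t : ℝ} (hq : 0 < q) (he : 0 < e) {N : ℕ} (hN : 1 ≤ N)
    (hB1 : 1 ≤ B) (hBN : (N : ℝ) ^ (1 / q) ≤ B) (ht : 0 < t) (htB : t ≤ B) :
    min (N : ℝ) (t ^ (-q)) ≤ B ^ |e - q| * t ^ (-e) := by
  have hN0 : (0:ℝ) < N := by exact_mod_cast Nat.lt_of_lt_of_le Nat.zero_lt_one hN
  have htinv : 0 < t⁻¹ := inv_pos.mpr ht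
  have habs : 0 ≤ |e - q| := abs_nonneg _
  have hBpos : 0 < B := lt_of_lt_of_le one_pos hB1
  have hinv_pow : ∀ s : ℝ, t ^ (-s) = (t⁻¹) ^ s := fun s => by
    rw [Real.inv_rpow ht.le, ← Real.rpow_neg ht.le]
  have hqinv : 0 ≤ 1 / q := by positivity
  by_cases hcase : t ^ (-q) ≤ N
  · rw [min_eq_right hcase]
    have hsplit : t ^ (-q) = t ^ (e - q) * t ^ (-e) := by
      rw [← Real.rpow_add ht]; ring_nf
    have key : t ^ (e - q) ≤ B ^ |e - q| := by
      rcases le_total q e with hqe | heq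
      · rw [abs_of_nonneg (sub_nonneg.mpr hqe)]
        exact Real.rpow_le_rpow ht.le htB (sub_nonneg.mpr hqe)
      · rw [abs_of_nonpos (sub_nonpos.mpr heq), neg_sub]
        have h1 : t ^ (e - q) = (t⁻¹) ^ (q - e) := by
          rw [← hinv_pow, neg_sub]
        have h2 : t⁻¹ ≤ (N:ℝ) ^ (1/q) := by
          have hq' : (t⁻¹) ^ q ≤ N := by rw [← hinv_pow q]; exact hcase
          calc t⁻¹ = ((t⁻¹) ^ q) ^ (1/q) := by
                rw [← Real.rpow_mul htinv.le, mul_one_div_cancel hq.ne', Real.rpow_one]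
            _ ≤ (N:ℝ) ^ (1/q) := Real.rpow_le_rpow (Real.rpow_nonneg htinv.le _) hq' hqinv
        calc t ^ (e - q) = (t⁻¹) ^ (q - e) := h1
          _ ≤ ((N:ℝ) ^ (1/q)) ^ (q - e) :=
              Real.rpow_le_rpow htinv.le h2 (sub_nonneg.mpr heq)
          _ ≤ B ^ (q - e) :=
              Real.rpow_le_rpow (Real.rpow_nonneg hN0.le _) hBN (sub_nonneg.mpr heq)
    calc t ^ (-q) = t ^ (e - q) * t ^ (-e) := hsplit
      _ ≤ B ^ |e - q| * t ^ (-e) :=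
          mul_le_mul_of_nonneg_right key (Real.rpow_nonneg ht.le _)
  · push_neg at hcase
    rw [min_eq_left hcase.le]
    have h2 : (N:ℝ) ^ (1/q) ≤ t⁻¹ := by
      have hq' : (N:ℝ) ≤ (t⁻¹) ^ q := by rw [← hinv_pow q]; exact hcase.le
      calc (N:ℝ) ^ (1/q) ≤ ((t⁻¹) ^ q) ^ (1/q) :=
            Real.rpow_le_rpow hN0.le hq' hqinv
        _ = t⁻¹ := by rw [← Real.rpow_mul htinv.le, mul_one_div_cancel hq.ne', Real.rpow_one]
    have hsplitN : (N:ℝ) = ((N:ℝ)^(1/q))^(q-e) * ((N:ℝ)^(1/q))^e := by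
      rw [← Real.rpow_add (Real.rpow_pos_of_pos hN0 _), sub_add_cancel,
        ← Real.rpow_mul hN0.le, one_div_mul_cancel hq.ne', Real.rpow_one]
    have hNe : ((N:ℝ)^(1/q))^e ≤ t^(-e) := by
      rw [hinv_pow e]
      exact Real.rpow_le_rpow (Real.rpow_nonneg hN0.le _) h2 he.le
    have hNqe : ((N:ℝ)^(1/q))^(q-e) ≤ B ^ |e - q| := by
      rcases le_total e q with heq | hqe
      · rw [abs_of_nonpos (sub_nonpos.mpr heq), neg_sub]
        exact Real.rpow_le_rpow (Real.rpow_nonneg hN0.le _) hBN (sub_nonneg.mpr heq)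
      · have hbase : 1 ≤ (N:ℝ)^(1/q) := Real.one_le_rpow (by exact_mod_cast hN) hqinv
        calc ((N:ℝ)^(1/q))^(q-e) ≤ 1 :=
              Real.rpow_le_one_of_one_le_of_nonpos hbase (sub_nonpos.mpr hqe)
          _ ≤ B ^ |e - q| := Real.one_le_rpow hB1 habs
    calc (N:ℝ) = ((N:ℝ)^(1/q))^(q-e) * ((N:ℝ)^(1/q))^e := hsplitN
      _ ≤ B ^ |e - q| * t^(-e) :=
          mul_le_mul hNqe hNe (Real.rpow_nonneg (Real.rpow_nonneg hN0.le _) _) (by positivity)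

private lemma aux_kernel_bound_edist {X : Type*} [PseudoMetricSpace X]
    {q e B : ℝ} (hq : 0 < q) (he : 0 < e) {N : ℕ} (hN : 1 ≤ N)
    (hB1 : 1 ≤ B) (hBN : (N : ℝ) ^ (1 / q) ≤ B) {x y : X} (hxy : dist x y ≤ B) :
    min (N : ℝ≥0∞) (edist x y ^ (-q)) ≤ ENNReal.ofReal (B ^ |e - q|) * edist x y ^ (-e) := by
  have hBpos : 0 < B := lt_of_lt_of_le one_pos hB1
  rcases eq_or_lt_of_le (dist_nonneg (x := x) (y := y)) with h0 | ht
  · have hed : edist x y = 0 := by rw [edist_dist, ← h0, ENNReal.ofReal_zero]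
    rw [hed, ENNReal.zero_rpow_of_neg (show (-e:ℝ) < 0 by linarith), ENNReal.mul_top]
    · exact le_top
    · simp only [ne_eq, ENNReal.ofReal_eq_zero, not_le]
      positivity
  · rw [edist_dist, ENNReal.ofReal_rpow_of_pos ht, ENNReal.ofReal_rpow_of_pos ht,
      show ((N : ℝ≥0∞)) = ENNReal.ofReal (N : ℝ) from (ENNReal.ofReal_natCast N).symm,
      ← (fun a b => Monotone.map_min (f := ENNReal.ofReal)
        (fun _ _ h => ENNReal.ofReal_le_ofReal h) (a := a) (b := b)) (N:ℝ) (dist x y ^ (-q)),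
      ← ENNReal.ofReal_mul (by positivity)]
    exact ENNReal.ofReal_le_ofReal (aux_real_bound hq he hN hB1 hBN ht hxy)

private lemma aux_isup_min (a : ℝ≥0∞) : ⨆ N : ℕ, min (N : ℝ≥0∞) a = a := by
  have h := (iSup_inf_eq (f := fun N : ℕ => (N : ℝ≥0∞)) (a := a)).symm
  simpa [ENNReal.iSup_natCast, min_def] using h

private lemma aux_tendstoC {B : ℝ} (hB1 : 1 ≤ B) {p : ℕ → ℝ} {q : ℝ}
    (hp : Tendsto p atTop (𝓝 q)) :
    Tendsto (fun j => ENNReal.ofReal (B ^ |p j - q|)) atTop (𝓝 1) := by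
  have hBpos : 0 < B := lt_of_lt_of_le one_pos hB1
  have h1 : Tendsto (fun j => |p j - q|) atTop (𝓝 0) := by
    have := (hp.sub_const q).abs
    simpa using this
  have h2 : Tendsto (fun j => B ^ |p j - q|) atTop (𝓝 1) := by
    have hc : ContinuousAt (fun s : ℝ => B ^ s) 0 := by
      have : (fun s : ℝ => B ^ s) = fun s => Real.exp (Real.log B * s) := by
        funext s; rw [Real.rpow_def_of_pos hBpos]
      rw [this]
      exact Real.continuous_exp.continuousAt.comp
        ((continuous_const.mul continuous_id).continuousAt)
    have := hc.tendsto.comp h1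
    simpa [Real.rpow_zero, Function.comp_def] using this
  have := (ENNReal.continuous_ofReal.tendsto _).comp h2
  simpa [Function.comp_def] using this

private lemma aux_liminf_add_const (u : ℕ → ℝ≥0∞) (c : ℝ≥0∞) :
    liminf (fun j => u j + c) atTop = liminf u atTop + c :=
  liminf_add_const atTop u c ⟨⊤, fun _ _ => le_top⟩
    (Filter.isBoundedUnder_of ⟨⊥, fun _ => bot_le⟩)

private lemma aux_double_iSup {n : ℕ} {q : ℝ}
    (ν : Measure (EuclideanSpace ℝ (Fin n))) [SFinite ν] :
    ∫⁻ x, ∫⁻ y, edist x y ^ (-q) ∂ν ∂ν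
      = ⨆ N : ℕ, ∫⁻ x, ∫⁻ y, min (N : ℝ≥0∞) (edist x y ^ (-q)) ∂ν ∂ν := by
  have hGm : Measurable fun z : EuclideanSpace ℝ (Fin n) × EuclideanSpace ℝ (Fin n) =>
      edist z.1 z.2 ^ (-q) :=
    (ENNReal.continuous_rpow_const.comp continuous_edist).measurable
  have hmin : ∀ N : ℕ, Measurable fun z : EuclideanSpace ℝ (Fin n) × EuclideanSpace ℝ (Fin n) =>
      min (N:ℝ≥0∞) (edist z.1 z.2 ^ (-q)) :=
    fun N => measurable_const.min hGm
  have hmono : ∀ (a : ℝ≥0∞), Monotone fun N : ℕ => min (N:ℝ≥0∞) a :=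
    fun a N M hNM => min_le_min (by exact_mod_cast hNM) le_rfl
  have hminy : ∀ (N : ℕ) (x : EuclideanSpace ℝ (Fin n)),
      Measurable fun y : EuclideanSpace ℝ (Fin n) => min (N:ℝ≥0∞) (edist x y ^ (-q)) :=
    fun N x => (continuous_const.min (ENNReal.continuous_rpow_const.comp
      (Continuous.edist continuous_const continuous_id))).measurable
  have hinner : ∀ x, ∫⁻ y, edist x y ^ (-q) ∂ν
      = ⨆ N : ℕ, ∫⁻ y, min (N:ℝ≥0∞) (edist x y ^ (-q)) ∂ν := by
    intro x
    calc ∫⁻ y, edist x y ^ (-q) ∂ν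
        = ∫⁻ y, ⨆ N : ℕ, min (N:ℝ≥0∞) (edist x y ^ (-q)) ∂ν :=
          lintegral_congr fun y => (aux_isup_min _).symm
      _ = ⨆ N : ℕ, ∫⁻ y, min (N:ℝ≥0∞) (edist x y ^ (-q)) ∂ν :=
          lintegral_iSup (fun N => hminy N x) (fun N M h y => hmono _ h)
  have hmeas2 : ∀ N : ℕ, Measurable fun x =>
      ∫⁻ y, min (N:ℝ≥0∞) (edist x y ^ (-q)) ∂ν :=
    fun N => Measurable.lintegral_prod_right
      (f := fun x y => min (N:ℝ≥0∞) (edist x y ^ (-q))) (hmin N)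
  calc ∫⁻ x, ∫⁻ y, edist x y ^ (-q) ∂ν ∂ν
      = ∫⁻ x, ⨆ N : ℕ, ∫⁻ y, min (N:ℝ≥0∞) (edist x y ^ (-q)) ∂ν ∂ν := lintegral_congr hinner
    _ = ⨆ N : ℕ, ∫⁻ x, ∫⁻ y, min (N:ℝ≥0∞) (edist x y ^ (-q)) ∂ν ∂ν :=
        lintegral_iSup hmeas2 (fun N M h x => lintegral_mono fun y => hmono _ h)

set_option maxHeartbeats 400000 in
private lemma aux_energy_bound {n : ℕ} {K : Set (EuclideanSpace ℝ (Fin n))} {q e B : ℝ}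
    (hq : 0 < q) (he : 0 < e) {N : ℕ} (hN : 1 ≤ N) (hB1 : 1 ≤ B) (hBN : (N:ℝ)^(1/q) ≤ B)
    (hdiam : ∀ x ∈ K, ∀ y ∈ K, dist x y ≤ B)
    (ν : Measure (EuclideanSpace ℝ (Fin n))) [SFinite ν] (hν : ν Kᶜ = 0) :
    ∫⁻ x, ∫⁻ y, min (N:ℝ≥0∞) (edist x y ^ (-q)) ∂ν ∂ν
      ≤ ENNReal.ofReal (B ^ |e - q|) * ∫⁻ x, ∫⁻ y, edist x y ^ (-e) ∂ν ∂ν := by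
  have hae : ∀ᵐ x ∂ν, x ∈ K := by rw [ae_iff]; exact hν
  have hker : Measurable fun z : EuclideanSpace ℝ (Fin n) × EuclideanSpace ℝ (Fin n) =>
      edist z.1 z.2 ^ (-e) :=
    (ENNReal.continuous_rpow_const.comp continuous_edist).measurable
  have hstep1 : ∀ x : EuclideanSpace ℝ (Fin n),
      ∫⁻ y, ENNReal.ofReal (B ^ |e - q|) * edist x y ^ (-e) ∂ν
      = ENNReal.ofReal (B ^ |e - q|) * ∫⁻ y, edist x y ^ (-e) ∂ν := by
    intro x
    exact lintegral_const_mul _ ((ENNReal.continuous_rpow_const.comp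
      (Continuous.edist continuous_const continuous_id)).measurable)
  have hstep2 : Measurable fun x => ∫⁻ y, edist x y ^ (-e) ∂ν :=
    Measurable.lintegral_prod_right (f := fun x y => edist x y ^ (-e)) hker
  have hstep3 : ∫⁻ x, ENNReal.ofReal (B ^ |e - q|) * ∫⁻ y, edist x y ^ (-e) ∂ν ∂ν
      = ENNReal.ofReal (B ^ |e - q|) * ∫⁻ x, ∫⁻ y, edist x y ^ (-e) ∂ν ∂ν :=
    lintegral_const_mul _ hstep2
  have hmid : ∫⁻ x, ∫⁻ y, min (N:ℝ≥0∞) (edist x y ^ (-q)) ∂ν ∂ν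
      ≤ ∫⁻ x, ENNReal.ofReal (B ^ |e - q|) * ∫⁻ y, edist x y ^ (-e) ∂ν ∂ν := by
    refine lintegral_mono_ae ?_
    filter_upwards [hae] with x hx
    rw [← hstep1 x]
    refine lintegral_mono_ae ?_
    filter_upwards [hae] with y hy
    exact aux_kernel_bound_edist hq he hN hB1 hBN (hdiam x hx y hy)
  exact hmid.trans_eq hstep3

private lemma aux_lsc_key {n : ℕ} {K : Set (EuclideanSpace ℝ (Fin n))} (hK : IsCompact K)
    (μj : ℕ → ProbabilityMeasure (EuclideanSpace ℝ (Fin n)))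
    (μ : ProbabilityMeasure (EuclideanSpace ℝ (Fin n)))
    (hconv : Tendsto μj atTop (𝓝 μ))
    (hsupp : ∀ j, (μj j : Measure (EuclideanSpace ℝ (Fin n))) Kᶜ = 0)
    (hμK : (μ : Measure (EuclideanSpace ℝ (Fin n))) Kᶜ = 0)
    (F : (EuclideanSpace ℝ (Fin n) × EuclideanSpace ℝ (Fin n)) →ᵇ ℝ≥0) :
    ∫⁻ x, ∫⁻ y, (F (x, y) : ℝ≥0∞) ∂(μ : Measure _) ∂(μ : Measure _) ≤
      liminf (fun j => ∫⁻ x, ∫⁻ y, (F (x, y) : ℝ≥0∞)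
        ∂(μj j : Measure _) ∂(μj j : Measure _)) atTop := by
  classical
  obtain ⟨c, hc⟩ := F.bounded
  have hc0 : 0 ≤ c := le_trans dist_nonneg (hc (0, 0) (0, 0))
  set C : ℝ≥0 := F (0, 0) + c.toNNReal with hC
  have hCb : ∀ z, (F z : ℝ≥0∞) ≤ (C : ℝ≥0∞) := by
    intro z
    have h := hc z (0, 0)
    rw [NNReal.dist_eq] at h
    have h1 : (F z : ℝ) ≤ (F (0,0) : ℝ) + c := by
      have := (abs_le.mp h).2; linarith
    have h2 : F z ≤ C := by
      rw [← NNReal.coe_le_coe, hC]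
      push_cast
      rw [Real.coe_toNNReal c hc0]
      exact h1
    exact_mod_cast h2
  have hFc : Continuous fun z : _ × _ => (F z : ℝ≥0∞) := ENNReal.continuous_coe.comp F.continuous
  have hFm2 : Measurable fun z : _ × _ => (F z : ℝ≥0∞) := hFc.measurable
  have hFym : ∀ x, Measurable fun y => (F (x, y) : ℝ≥0∞) :=
    fun x => hFm2.comp (measurable_prodMk_left)
  set g : EuclideanSpace ℝ (Fin n) → ℝ≥0∞ :=
    fun x => ∫⁻ y, (F (x, y) : ℝ≥0∞) ∂(μ : Measure _) with hg
  set gj : ℕ → EuclideanSpace ℝ (Fin n) → ℝ≥0∞ :=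
    fun j x => ∫⁻ y, (F (x, y) : ℝ≥0∞) ∂(μj j : Measure _) with hgj
  have hgjm : ∀ j, Measurable (gj j) := fun j =>
    Measurable.lintegral_prod_right (f := fun x y => (F (x, y) : ℝ≥0∞)) hFm2
  have hgb : ∀ x, g x ≤ (C : ℝ≥0∞) := by
    intro x
    calc g x ≤ ∫⁻ _, (C : ℝ≥0∞) ∂(μ : Measure (EuclideanSpace ℝ (Fin n))) :=
          lintegral_mono fun y => hCb _
      _ = C := by simp
  have hgjb : ∀ j x, gj j x ≤ (C : ℝ≥0∞) := by
    intro j x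
    calc gj j x ≤ ∫⁻ _, (C : ℝ≥0∞) ∂(μj j : Measure (EuclideanSpace ℝ (Fin n))) :=
          lintegral_mono fun y => hCb _
      _ = C := by simp
  have hgtop : ∀ x, g x ≠ ⊤ := fun x => ne_top_of_le_ne_top coe_ne_top (hgb x)
  have hpt : ∀ z, Tendsto (fun j => gj j z) atTop (𝓝 (g z)) := by
    intro z
    have h := ProbabilityMeasure.tendsto_iff_forall_lintegral_tendsto.mp hconv
      (F.compContinuous ⟨fun y => (z, y), (continuous_const.prodMk continuous_id)⟩)
    exact h
  have hgcont : Continuous g := by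
    rw [continuous_iff_continuousAt]
    intro x₀
    have : Tendsto (fun x => ∫⁻ y, (F (x, y) : ℝ≥0∞) ∂(μ : Measure _)) (𝓝 x₀)
        (𝓝 (∫⁻ y, (F (x₀, y) : ℝ≥0∞) ∂(μ : Measure _))) := by
      apply tendsto_lintegral_filter_of_dominated_convergence (fun _ => (C : ℝ≥0∞))
      · exact Eventually.of_forall fun x => hFym x
      · exact Eventually.of_forall fun x => ae_of_all _ fun y => hCb _
      · simp
      · exact ae_of_all _ fun y =>
          ((hFc.comp (continuous_id.prodMk continuous_const)).tendsto x₀)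
    exact this
  have hcont' : Continuous fun x => (g x).toNNReal := by
    rw [continuous_iff_continuousAt]
    intro x₀
    exact (ENNReal.tendsto_toNNReal (hgtop x₀)).comp (hgcont.tendsto x₀)
  have htoC : ∀ x, (g x).toNNReal ≤ C := by
    intro x
    rw [← ENNReal.coe_le_coe, ENNReal.coe_toNNReal (hgtop x)]
    exact hgb x
  have hbdd' : ∀ a b, dist ((g a).toNNReal) ((g b).toNNReal) ≤ (C : ℝ) := by
    intro a b
    rw [NNReal.dist_eq, abs_le]
    constructor
    · have : ((g b).toNNReal : ℝ) ≤ C := by exact_mod_cast htoC b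
      have h0 := ((g a).toNNReal).coe_nonneg
      linarith
    · have : ((g a).toNNReal : ℝ) ≤ C := by exact_mod_cast htoC a
      have h0 := ((g b).toNNReal).coe_nonneg
      linarith
  set gN : EuclideanSpace ℝ (Fin n) →ᵇ ℝ≥0 := ⟨⟨fun x => (g x).toNNReal, hcont'⟩, ⟨C, hbdd'⟩⟩
    with hgN
  have hgNcoe : ∀ x, ((gN x : ℝ≥0) : ℝ≥0∞) = g x := fun x => ENNReal.coe_toNNReal (hgtop x)
  have htend : Tendsto (fun j => ∫⁻ x, g x ∂(μj j : Measure _)) atTop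
      (𝓝 (∫⁻ x, g x ∂(μ : Measure _))) := by
    have h := ProbabilityMeasure.tendsto_iff_forall_lintegral_tendsto.mp hconv gN
    have e1 : ∀ (ν : Measure (EuclideanSpace ℝ (Fin n))),
        ∫⁻ x, g x ∂ν = ∫⁻ x, ((gN x : ℝ≥0) : ℝ≥0∞) ∂ν :=
      fun ν => lintegral_congr fun x => (hgNcoe x).symm
    simp_rw [e1]
    exact h
  have haeμ : ∀ᵐ x ∂(μ : Measure (EuclideanSpace ℝ (Fin n))), x ∈ K := by
    rw [ae_iff]; exact hμK
  have haej : ∀ j, ∀ᵐ x ∂(μj j : Measure (EuclideanSpace ℝ (Fin n))), x ∈ K := by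
    intro j; rw [ae_iff]; exact hsupp j
  show ∫⁻ x, g x ∂(μ : Measure _) ≤ liminf (fun j => ∫⁻ x, gj j x ∂(μj j : Measure _)) atTop
  refine ENNReal.le_of_forall_pos_le_add fun ε hε _ => ?_
  have hε3 : 0 < ε / 3 := by positivity
  set ε3 : ℝ≥0 := ε / 3 with hε3def
  have hKK : IsCompact (K ×ˢ K) := hK.prod hK
  have hUC := hKK.uniformContinuousOn_of_continuous (F.continuous.continuousOn)
  rw [Metric.uniformContinuousOn_iff] at hUC
  obtain ⟨δ, hδ, hδ'⟩ := hUC (ε3 : ℝ) (by exact_mod_cast hε3)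
  have hstep : ∀ a b y : EuclideanSpace ℝ (Fin n), a ∈ K → b ∈ K → y ∈ K → dist a b < δ →
      (F (a, y) : ℝ≥0∞) ≤ (F (b, y) : ℝ≥0∞) + (ε3 : ℝ≥0∞) := by
    intro a b y ha hb hy hab
    have hd : dist (a, y) (b, y) < δ := by
      rw [Prod.dist_eq]
      simpa [dist_self, max_eq_left dist_nonneg] using hab
    have h := hδ' _ ⟨ha, hy⟩ _ ⟨hb, hy⟩ hd
    rw [NNReal.dist_eq] at h
    have hr : (F (a, y) : ℝ) ≤ (F (b, y) : ℝ) + (ε3 : ℝ) := by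
      have := (abs_lt.mp h).2; linarith
    have hnn : F (a, y) ≤ F (b, y) + ε3 := by
      rw [← NNReal.coe_le_coe]; push_cast; exact hr
    exact_mod_cast hnn
  obtain ⟨t, htK, htfin, hcover⟩ := hK.finite_cover_balls hδ
  have hev : ∀ᶠ j in atTop, ∀ z ∈ t, g z ≤ gj j z + (ε3 : ℝ≥0∞) := by
    rw [Filter.eventually_all_finite htfin]
    intro z _
    have hopen : IsOpen {w : ℝ≥0∞ | g z < w + (ε3 : ℝ≥0∞)} := by
      have hcontadd : Continuous fun w : ℝ≥0∞ => w + (ε3 : ℝ≥0∞) :=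
        continuous_id.add continuous_const
      exact isOpen_Ioi.preimage hcontadd
    have hmem : g z ∈ {w : ℝ≥0∞ | g z < w + (ε3 : ℝ≥0∞)} :=
      ENNReal.lt_add_right (hgtop z) (by exact_mod_cast hε3.ne')
    exact ((hpt z).eventually (hopen.mem_nhds hmem)).mono fun j hj => le_of_lt hj
  have hev2 : ∀ᶠ j in atTop, ∀ x ∈ K,
      g x ≤ gj j x + (ε3 : ℝ≥0∞) + (ε3 : ℝ≥0∞) + (ε3 : ℝ≥0∞) := by
    filter_upwards [hev] with j hj x hx
    obtain ⟨z, hz, hxz⟩ := Set.mem_iUnion₂.mp (hcover hx)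
    have hzK : z ∈ K := htK hz
    have hxz' : dist x z < δ := Metric.mem_ball.mp hxz
    have h1 : g x ≤ g z + (ε3 : ℝ≥0∞) := by
      calc g x ≤ ∫⁻ y, ((F (z, y) : ℝ≥0∞) + (ε3 : ℝ≥0∞)) ∂(μ : Measure _) := by
            refine lintegral_mono_ae ?_
            filter_upwards [haeμ] with y hy
            exact hstep x z y hx hzK hy hxz'
        _ = g z + (ε3 : ℝ≥0∞) := by
            rw [lintegral_add_right _ measurable_const, lintegral_const, measure_univ, mul_one]
    have h2 : g z ≤ gj j z + (ε3 : ℝ≥0∞) := hj z hz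
    have h3 : gj j z ≤ gj j x + (ε3 : ℝ≥0∞) := by
      calc gj j z ≤ ∫⁻ y, ((F (x, y) : ℝ≥0∞) + (ε3 : ℝ≥0∞)) ∂(μj j : Measure _) := by
            refine lintegral_mono_ae ?_
            filter_upwards [haej j] with y hy
            exact hstep z x y hzK hx hy (by rwa [dist_comm])
        _ = gj j x + (ε3 : ℝ≥0∞) := by
            rw [lintegral_add_right _ measurable_const, lintegral_const, measure_univ, mul_one]
    calc g x ≤ g z + (ε3 : ℝ≥0∞) := h1
      _ ≤ (gj j z + (ε3 : ℝ≥0∞)) + (ε3 : ℝ≥0∞) := add_le_add_left h2 _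
      _ ≤ ((gj j x + (ε3 : ℝ≥0∞)) + (ε3 : ℝ≥0∞)) + (ε3 : ℝ≥0∞) :=
          add_le_add_left (add_le_add_left h3 _) _
  have hev3 : ∀ᶠ j in atTop, ∫⁻ x, g x ∂(μj j : Measure _) ≤
      (∫⁻ x, gj j x ∂(μj j : Measure _)) + (ε3 : ℝ≥0∞) + (ε3 : ℝ≥0∞) + (ε3 : ℝ≥0∞) := by
    filter_upwards [hev2] with j hj
    calc ∫⁻ x, g x ∂(μj j : Measure _)
        ≤ ∫⁻ x, (gj j x + (ε3 : ℝ≥0∞) + (ε3 : ℝ≥0∞) + (ε3 : ℝ≥0∞)) ∂(μj j : Measure _) := by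
          refine lintegral_mono_ae ?_
          filter_upwards [haej j] with x hx
          exact hj x hx
      _ = (∫⁻ x, gj j x ∂(μj j : Measure _)) + (ε3 : ℝ≥0∞) + (ε3 : ℝ≥0∞) + (ε3 : ℝ≥0∞) := by
          rw [lintegral_add_right _ measurable_const, lintegral_add_right _ measurable_const,
            lintegral_add_right _ measurable_const, lintegral_const, measure_univ, mul_one]
  have h3eps : (ε3 : ℝ≥0∞) + (ε3 : ℝ≥0∞) + (ε3 : ℝ≥0∞) ≤ (ε : ℝ≥0∞) := by
    rw [← ENNReal.coe_add, ← ENNReal.coe_add]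
    apply ENNReal.coe_le_coe.2
    rw [hε3def]
    rw [← add_div, ← add_div]
    exact NNReal.div_le_of_le_mul (by ring_nf; exact le_rfl)
  calc ∫⁻ x, g x ∂(μ : Measure _)
      = liminf (fun j => ∫⁻ x, g x ∂(μj j : Measure _)) atTop := (htend.liminf_eq).symm
    _ ≤ liminf (fun j => (∫⁻ x, gj j x ∂(μj j : Measure _)) + (ε3 : ℝ≥0∞) + (ε3 : ℝ≥0∞)
          + (ε3 : ℝ≥0∞)) atTop := liminf_le_liminf hev3
    _ = liminf (fun j => ∫⁻ x, gj j x ∂(μj j : Measure _)) atTop + (ε3 : ℝ≥0∞) + (ε3 : ℝ≥0∞)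
          + (ε3 : ℝ≥0∞) := by
          rw [aux_liminf_add_const, aux_liminf_add_const, aux_liminf_add_const]
    _ ≤ liminf (fun j => ∫⁻ x, gj j x ∂(μj j : Measure _)) atTop + (ε : ℝ≥0∞) := by
          rw [add_assoc, add_assoc]
          exact add_le_add_right (by rw [← add_assoc]; exact h3eps) _

end AuxRiesz

/-- Riesz `p`-energy for `p > 0`: the infimum over probability measures supported
on `K` of the double integral of `|x-y|^{-p}`. -/
noncomputable def rieszV {n : ℕ} (p : ℝ) (K : Set (EuclideanSpace ℝ (Fin n))) : ℝ≥0∞ :=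
  ⨅ (μ : Measure (EuclideanSpace ℝ (Fin n))) (_ : IsProbabilityMeasure μ) (_ : μ Kᶜ = 0),
    ∫⁻ x, ∫⁻ y, edist x y ^ (-p) ∂μ ∂μ

/-- Lower semicontinuity of Riesz energy via truncation: if
`p_j → q > 0` with `p_j > 0`, `μ_j` are probability measures on the compact set `K`
attaining `V_{p_j}(K)`, and `μ_j → μ` weak-*, then
`V_q(K) ≤ ∫∫ |x-y|^{-q} dμdμ ≤ liminf_j V_{p_j}(K)`. -/
theorem rieszV_liminf {n : ℕ} (K : Set (EuclideanSpace ℝ (Fin n)))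
    (hK : IsCompact K) (hne : K.Nonempty) (q : ℝ) (hq : 0 < q)
    (p : ℕ → ℝ) (hppos : ∀ j, 0 < p j) (hp : Tendsto p atTop (𝓝 q))
    (μj : ℕ → ProbabilityMeasure (EuclideanSpace ℝ (Fin n)))
    (hsupp : ∀ j, (μj j : Measure (EuclideanSpace ℝ (Fin n))) Kᶜ = 0)
    (hopt : ∀ j, (∫⁻ x, ∫⁻ y, edist x y ^ (-(p j))
        ∂(μj j : Measure (EuclideanSpace ℝ (Fin n)))
        ∂(μj j : Measure (EuclideanSpace ℝ (Fin n)))) = rieszV (p j) K)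
    (μ : ProbabilityMeasure (EuclideanSpace ℝ (Fin n)))
    (hconv : Tendsto μj atTop (𝓝 μ)) :
    rieszV q K ≤ (∫⁻ x, ∫⁻ y, edist x y ^ (-q)
        ∂(μ : Measure (EuclideanSpace ℝ (Fin n)))
        ∂(μ : Measure (EuclideanSpace ℝ (Fin n)))) ∧
    (∫⁻ x, ∫⁻ y, edist x y ^ (-q)
        ∂(μ : Measure (EuclideanSpace ℝ (Fin n)))
        ∂(μ : Measure (EuclideanSpace ℝ (Fin n))))
      ≤ liminf (fun j => rieszV (p j) K) atTop := by
  classical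
  have hμK : (μ : Measure (EuclideanSpace ℝ (Fin n))) Kᶜ = 0 := by
    have hopen : IsOpen Kᶜ := hK.isClosed.isOpen_compl
    have h := ProbabilityMeasure.le_liminf_measure_open_of_tendsto hconv hopen
    have h0 : (liminf (fun j => (μj j : Measure (EuclideanSpace ℝ (Fin n))) Kᶜ) atTop)
        = 0 := by
      have he : (fun j => (μj j : Measure (EuclideanSpace ℝ (Fin n))) Kᶜ)
          = fun _ => (0:ℝ≥0∞) := funext fun j => hsupp j
      rw [he, liminf_const]
    exact le_antisymm (h.trans h0.le) zero_le
  constructor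
  · exact iInf_le_of_le (μ : Measure (EuclideanSpace ℝ (Fin n)))
      (iInf_le_of_le inferInstance (iInf_le_of_le hμK le_rfl))
  · rw [aux_double_iSup]
    apply iSup_le
    intro N
    rcases Nat.eq_zero_or_pos N with h0 | hNpos
    · subst h0
      have hz : ∀ x y : EuclideanSpace ℝ (Fin n),
          min ((0:ℕ) : ℝ≥0∞) (edist x y ^ (-q)) = 0 := fun x y => by
        simp
      simp only [hz, lintegral_zero]
      exact zero_le
    · have hN : 1 ≤ N := hNpos
      set B : ℝ := max (Metric.diam K) (max ((N:ℝ)^(1/q)) 1) with hB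
      have hB1 : 1 ≤ B := le_max_of_le_right (le_max_right _ _)
      have hBN : (N:ℝ)^(1/q) ≤ B := le_max_of_le_right (le_max_left _ _)
      have hdiam : ∀ x ∈ K, ∀ y ∈ K, dist x y ≤ B := fun x hx y hy =>
        (Metric.dist_le_diam_of_mem hK.isBounded hx hy).trans (le_max_left _ _)
      -- truncated kernel as a bounded continuous function
      have hminne : ∀ z : EuclideanSpace ℝ (Fin n) × EuclideanSpace ℝ (Fin n),
          min (N:ℝ≥0∞) (edist z.1 z.2 ^ (-q)) ≠ ⊤ :=
        fun z => ne_top_of_le_ne_top (natCast_ne_top N) (min_le_left _ _)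
      have hcontFN : Continuous fun z : EuclideanSpace ℝ (Fin n) × EuclideanSpace ℝ (Fin n) =>
          (min (N:ℝ≥0∞) (edist z.1 z.2 ^ (-q))).toNNReal := by
        rw [continuous_iff_continuousAt]
        intro z
        have h1 : Continuous fun z : EuclideanSpace ℝ (Fin n) × EuclideanSpace ℝ (Fin n) =>
            min (N:ℝ≥0∞) (edist z.1 z.2 ^ (-q)) :=
          continuous_const.min (ENNReal.continuous_rpow_const.comp continuous_edist)
        exact (ENNReal.tendsto_toNNReal (hminne z)).comp (h1.tendsto z)
      have htoN : ∀ z : EuclideanSpace ℝ (Fin n) × EuclideanSpace ℝ (Fin n),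
          ((min (N:ℝ≥0∞) (edist z.1 z.2 ^ (-q))).toNNReal : ℝ) ≤ (N:ℝ) := by
        intro z
        have h1 : (min (N:ℝ≥0∞) (edist z.1 z.2 ^ (-q))).toNNReal ≤ (N:ℝ≥0) := by
          rw [← ENNReal.coe_le_coe, ENNReal.coe_toNNReal (hminne z)]
          exact_mod_cast min_le_left _ _
        exact_mod_cast h1
      have hbddFN : ∀ a b : EuclideanSpace ℝ (Fin n) × EuclideanSpace ℝ (Fin n),
          dist ((min (N:ℝ≥0∞) (edist a.1 a.2 ^ (-q))).toNNReal)
            ((min (N:ℝ≥0∞) (edist b.1 b.2 ^ (-q))).toNNReal) ≤ (N:ℝ) := by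
        intro a b
        rw [NNReal.dist_eq, abs_le]
        constructor
        · have h0 := ((min (N:ℝ≥0∞) (edist a.1 a.2 ^ (-q))).toNNReal).coe_nonneg
          have := htoN b
          linarith
        · have h0 := ((min (N:ℝ≥0∞) (edist b.1 b.2 ^ (-q))).toNNReal).coe_nonneg
          have := htoN a
          linarith
      set FN : (EuclideanSpace ℝ (Fin n) × EuclideanSpace ℝ (Fin n)) →ᵇ ℝ≥0 :=
        ⟨⟨fun z => (min (N:ℝ≥0∞) (edist z.1 z.2 ^ (-q))).toNNReal, hcontFN⟩,
          ⟨(N:ℝ), hbddFN⟩⟩ with hFN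
      have hFNcoe : ∀ z : EuclideanSpace ℝ (Fin n) × EuclideanSpace ℝ (Fin n),
          ((FN z : ℝ≥0) : ℝ≥0∞) = min (N:ℝ≥0∞) (edist z.1 z.2 ^ (-q)) :=
        fun z => ENNReal.coe_toNNReal (hminne z)
      have hlsc := aux_lsc_key hK μj μ hconv hsupp hμK FN
      have heq1 : ∀ (ν : Measure (EuclideanSpace ℝ (Fin n))),
          ∫⁻ x, ∫⁻ y, ((FN (x, y) : ℝ≥0) : ℝ≥0∞) ∂ν ∂ν
            = ∫⁻ x, ∫⁻ y, min (N:ℝ≥0∞) (edist x y ^ (-q)) ∂ν ∂ν := fun ν =>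
        lintegral_congr fun x => lintegral_congr fun y => hFNcoe (x, y)
      simp_rw [heq1] at hlsc
      -- energy comparison
      have hbound : ∀ j, ∫⁻ x, ∫⁻ y, min (N:ℝ≥0∞) (edist x y ^ (-q))
            ∂(μj j : Measure (EuclideanSpace ℝ (Fin n)))
            ∂(μj j : Measure (EuclideanSpace ℝ (Fin n)))
          ≤ ENNReal.ofReal (B ^ |p j - q|) * ∫⁻ x, ∫⁻ y, edist x y ^ (-(p j))
            ∂(μj j : Measure (EuclideanSpace ℝ (Fin n)))
            ∂(μj j : Measure (EuclideanSpace ℝ (Fin n))) := fun j =>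
        aux_energy_bound hq (hppos j) hN hB1 hBN hdiam _ (hsupp j)
      have hliminf1 : liminf (fun j => ∫⁻ x, ∫⁻ y, min (N:ℝ≥0∞) (edist x y ^ (-q))
            ∂(μj j : Measure (EuclideanSpace ℝ (Fin n)))
            ∂(μj j : Measure (EuclideanSpace ℝ (Fin n)))) atTop
          ≤ liminf (fun j => ENNReal.ofReal (B ^ |p j - q|)
            * ∫⁻ x, ∫⁻ y, edist x y ^ (-(p j))
            ∂(μj j : Measure (EuclideanSpace ℝ (Fin n)))
            ∂(μj j : Measure (EuclideanSpace ℝ (Fin n)))) atTop :=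
        liminf_le_liminf (Filter.Eventually.of_forall hbound)
      have htendC := aux_tendstoC hB1 hp
      have hlimsupC : limsup (fun j => ENNReal.ofReal (B ^ |p j - q|)) atTop = 1 :=
        htendC.limsup_eq
      have hml := ENNReal.liminf_mul_le
        (u := fun j => ENNReal.ofReal (B ^ |p j - q|))
        (v := fun j => ∫⁻ x, ∫⁻ y, edist x y ^ (-(p j))
            ∂(μj j : Measure (EuclideanSpace ℝ (Fin n)))
            ∂(μj j : Measure (EuclideanSpace ℝ (Fin n))))
        (Or.inl (by rw [hlimsupC]; exact one_ne_zero))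
        (Or.inl (by rw [hlimsupC]; exact one_ne_top))
      rw [hlimsupC, one_mul] at hml
      have hEeq : (fun j => rieszV (p j) K)
          = fun j => ∫⁻ x, ∫⁻ y, edist x y ^ (-(p j))
            ∂(μj j : Measure (EuclideanSpace ℝ (Fin n)))
            ∂(μj j : Measure (EuclideanSpace ℝ (Fin n))) :=
        funext fun j => (hopt j).symm
      rw [hEeq]
      exact hlsc.trans (hliminf1.trans hml)
end

section
/- Right-continuity of energy under an integrability hypothesis: let K ⊂ R^n be compact, q > 0, and suppose μ_q is a probability measure on K achieving V_q(K) < ∞, with ∫∫ |x-y|^{-q_*} dμ_q dμ_q < ∞ for some q_* > q. Then limsup_{p↘q} V_p(K) ≤ V_q(K), and combined with V_q(K) ≤ liminf_{p↘q} V_p(K) one gets lim_{p↘q} V_p(K) = V_q(K) and hence lim_{p↘q} Cap_p(K) = Cap_q(K). -/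
open MeasureTheory ENNReal Filter Topology

/-- Riesz `p`-capacity `Cap_p(K) = V_p(K)^{-1/p}` for `p > 0`. -/
noncomputable def rieszCapPos {n : ℕ} (p : ℝ) (K : Set (EuclideanSpace ℝ (Fin n))) : ℝ≥0∞ :=
  rieszV p K ^ (-1 / p)

/-- For a finite positive extended real, `rpow` can be computed via `toReal`. -/
lemma aux_rpow_eq_ofReal {t : ℝ≥0∞} (ht0 : t ≠ 0) (htop : t ≠ ∞) (e : ℝ) :
    t ^ e = ENNReal.ofReal (t.toReal ^ e) := by
  conv_lhs => rw [← ENNReal.ofReal_toReal htop]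
  rw [ENNReal.ofReal_rpow_of_pos (ENNReal.toReal_pos ht0 htop)]

/-- Continuity of `rpow` in the exponent, for a finite positive base. -/
lemma aux_tendsto_rpow {t : ℝ≥0∞} (ht0 : t ≠ 0) (htop : t ≠ ∞) {l : Filter ℝ}
    {g : ℝ → ℝ} {a : ℝ} (hg : Tendsto g l (𝓝 a)) :
    Tendsto (fun p => t ^ g p) l (𝓝 (t ^ a)) := by
  have hpos := ENNReal.toReal_pos ht0 htop
  have h1 : Tendsto (fun p => ((t.toReal : ℝ), g p)) l (𝓝 (t.toReal, a)) :=
    tendsto_const_nhds.prodMk_nhds hg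
  have h2 := (Real.continuousAt_rpow (t.toReal, a) (Or.inl hpos.ne')).tendsto.comp h1
  have h3 := (ENNReal.continuous_ofReal.tendsto _).comp h2
  simpa only [Function.comp_def, ← aux_rpow_eq_ofReal ht0 htop] using h3

/-- Pointwise convergence of `t ^ (-p)` as `p → q⁺`, for any `t : ℝ≥0∞`. -/
lemma aux_tendsto_rpow_neg (t : ℝ≥0∞) {q : ℝ} (hq : 0 < q) :
    Tendsto (fun p : ℝ => t ^ (-p)) (𝓝[>] q) (𝓝 (t ^ (-q))) := by
  rcases eq_or_ne t 0 with rfl | ht0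
  · rw [ENNReal.zero_rpow_of_neg (neg_lt_zero.mpr hq)]
    refine Tendsto.congr' ?_ tendsto_const_nhds
    filter_upwards [self_mem_nhdsWithin] with p hp
    rw [ENNReal.zero_rpow_of_neg (neg_lt_zero.mpr (hq.trans hp))]
  rcases eq_or_ne t ∞ with rfl | htop
  · rw [ENNReal.top_rpow_of_neg (neg_lt_zero.mpr hq)]
    refine Tendsto.congr' ?_ tendsto_const_nhds
    filter_upwards [self_mem_nhdsWithin] with p hp
    rw [ENNReal.top_rpow_of_neg (neg_lt_zero.mpr (hq.trans hp))]
  exact aux_tendsto_rpow ht0 htop ((continuous_neg.tendsto q).mono_left nhdsWithin_le_nhds)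

/-- Jensen's inequality for probability measures: `∫ f ≤ (∫ f^r)^{1/r}` for `r > 1`. -/
lemma aux_lintegral_le_rpow {α : Type*} [MeasurableSpace α] (ν : Measure α)
    [IsProbabilityMeasure ν] {f : α → ℝ≥0∞} (hf : AEMeasurable f ν) {r : ℝ} (hr : 1 < r) :
    ∫⁻ a, f a ∂ν ≤ (∫⁻ a, f a ^ r ∂ν) ^ (1 / r) := by
  have hconj := Real.HolderConjugate.conjExponent hr
  have h := ENNReal.lintegral_mul_le_Lp_mul_Lq ν hconj hf
    (aemeasurable_const (b := (1 : ℝ≥0∞)))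
  simpa using h

/-- Right-continuity of energy under an integrability hypothesis:
if `μ_q` is a probability measure on the compact set `K` achieving `V_q(K) < ∞` and
`∫∫ |x-y|^{-q_*} dμ_q dμ_q < ∞` for some `q_* > q > 0`, then
`limsup_{p↘q} V_p(K) ≤ V_q(K)`, `lim_{p↘q} V_p(K) = V_q(K)`, and
`lim_{p↘q} Cap_p(K) = Cap_q(K)`. -/
theorem rieszV_right_continuous {n : ℕ} (K : Set (EuclideanSpace ℝ (Fin n)))
    (hK : IsCompact K) (q qs : ℝ) (hq : 0 < q) (hqs : q < qs)
    (μq : Measure (EuclideanSpace ℝ (Fin n))) [IsProbabilityMeasure μq]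
    (hsupp : μq Kᶜ = 0)
    (hach : (∫⁻ x, ∫⁻ y, edist x y ^ (-q) ∂μq ∂μq) = rieszV q K)
    (hfin : rieszV q K < ∞)
    (hdom : (∫⁻ x, ∫⁻ y, edist x y ^ (-qs) ∂μq ∂μq) < ∞) :
    limsup (fun p : ℝ => rieszV p K) (𝓝[>] q) ≤ rieszV q K ∧
    Tendsto (fun p : ℝ => rieszV p K) (𝓝[>] q) (𝓝 (rieszV q K)) ∧
    Tendsto (fun p : ℝ => rieszCapPos p K) (𝓝[>] q) (𝓝 (rieszCapPos q K)) := by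
  have hmeas : ∀ r : ℝ, Measurable fun z : (EuclideanSpace ℝ (Fin n)) × (EuclideanSpace ℝ (Fin n)) => edist z.1 z.2 ^ (-r) := fun r =>
    measurable_edist.pow_const _
  have hprod : ∀ (r : ℝ) (μ : Measure (EuclideanSpace ℝ (Fin n))), SFinite μ →
      ∫⁻ z : (EuclideanSpace ℝ (Fin n)) × (EuclideanSpace ℝ (Fin n)), edist z.1 z.2 ^ (-r) ∂(μ.prod μ) =
        ∫⁻ x, ∫⁻ y, edist x y ^ (-r) ∂μ ∂μ := fun r μ _ =>
    lintegral_prod _ (hmeas r).aemeasurable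
  set I : ℝ → ℝ≥0∞ := fun r => ∫⁻ x, ∫⁻ y, edist x y ^ (-r) ∂μq ∂μq with hIdef
  have hVleI : ∀ r : ℝ, rieszV r K ≤ I r := fun r =>
    iInf_le_of_le μq (iInf_le_of_le inferInstance (iInf_le_of_le hsupp le_rfl))
  have hKae : ∀ᵐ x ∂μq, x ∈ K := by
    rw [ae_iff]
    exact hsupp
  -- Step 1: dominated convergence, `I p → I q` as `p → q⁺`.
  have hIt : Tendsto I (𝓝[>] q) (𝓝 (I q)) := by
    have hIeq : ∀ r : ℝ, I r = ∫⁻ z : (EuclideanSpace ℝ (Fin n)) × (EuclideanSpace ℝ (Fin n)), edist z.1 z.2 ^ (-r) ∂(μq.prod μq) :=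
      fun r => (hprod r μq inferInstance).symm
    simp only [funext hIeq, hIeq q]
    refine tendsto_lintegral_filter_of_dominated_convergence
      (fun z => edist z.1 z.2 ^ (-q) + edist z.1 z.2 ^ (-qs))
      (Eventually.of_forall fun p => hmeas p) ?_ ?_ ?_
    · filter_upwards [Ioo_mem_nhdsGT hqs] with p hp
      refine Eventually.of_forall fun z => ?_
      rcases le_total (edist z.1 z.2) 1 with h1 | h1
      · exact le_add_left
          (ENNReal.rpow_le_rpow_of_exponent_ge h1 (by linarith [hp.2]))
      · exact le_add_right
          (ENNReal.rpow_le_rpow_of_exponent_le h1 (by linarith [hp.1]))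
    · rw [lintegral_add_left (hmeas q), hprod q μq inferInstance, hprod qs μq inferInstance]
      exact ENNReal.add_ne_top.mpr ⟨by rw [hach]; exact hfin.ne, hdom.ne⟩
    · exact Eventually.of_forall fun z => aux_tendsto_rpow_neg _ hq
  -- Step 2: limsup bound.
  have hlimsup : limsup (fun p : ℝ => rieszV p K) (𝓝[>] q) ≤ rieszV q K := by
    calc limsup (fun p : ℝ => rieszV p K) (𝓝[>] q) ≤ limsup I (𝓝[>] q) :=
          limsup_le_limsup (Eventually.of_forall fun p => hVleI p)
      _ = I q := hIt.limsup_eq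
      _ = rieszV q K := hach
  -- Step 3: lower bound `V_q ^ (p/q) ≤ V_p` for `p > q`.
  have hlow : ∀ p : ℝ, q < p → rieszV q K ^ (p / q) ≤ rieszV p K := by
    intro p hp
    have hpq1 : 1 < p / q := (one_lt_div hq).mpr hp
    refine le_iInf fun μ => le_iInf fun hμprob => le_iInf fun hμsupp => ?_
    haveI := hμprob
    have h1 : rieszV q K ≤ ∫⁻ x, ∫⁻ y, edist x y ^ (-q) ∂μ ∂μ :=
      iInf_le_of_le μ (iInf_le_of_le hμprob (iInf_le_of_le hμsupp le_rfl))
    have h2 : (∫⁻ x, ∫⁻ y, edist x y ^ (-q) ∂μ ∂μ) ≤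
        (∫⁻ x, ∫⁻ y, edist x y ^ (-p) ∂μ ∂μ) ^ (q / p) := by
      have hmono := aux_lintegral_le_rpow (μ.prod μ) (hmeas q).aemeasurable hpq1
      rw [hprod q μ inferInstance] at hmono
      have hexp : ∀ z : (EuclideanSpace ℝ (Fin n)) × (EuclideanSpace ℝ (Fin n)), (edist z.1 z.2 ^ (-q)) ^ (p / q) = edist z.1 z.2 ^ (-p) := by
        intro z
        rw [← ENNReal.rpow_mul, show -q * (p / q) = -p by field_simp]
      simp only [hexp] at hmono
      rw [hprod p μ inferInstance, one_div_div] at hmono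
      exact hmono
    calc rieszV q K ^ (p / q)
        ≤ ((∫⁻ x, ∫⁻ y, edist x y ^ (-p) ∂μ ∂μ) ^ (q / p)) ^ (p / q) :=
          ENNReal.rpow_le_rpow (h1.trans h2) (by positivity)
      _ = (∫⁻ x, ∫⁻ y, edist x y ^ (-p) ∂μ ∂μ) := by
          rw [← ENNReal.rpow_mul, show q / p * (p / q) = 1 by
            rw [div_mul_div_comm, div_eq_one_iff_eq (mul_pos (hq.trans hp) hq).ne']; ring, ENNReal.rpow_one]
  -- Step 4: liminf bound.
  have hliminf : rieszV q K ≤ liminf (fun p : ℝ => rieszV p K) (𝓝[>] q) := by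
    have htends : Tendsto (fun p : ℝ => rieszV q K ^ (p / q)) (𝓝[>] q) (𝓝 (rieszV q K)) := by
      rcases eq_or_ne (rieszV q K) 0 with h0 | h0
      · rw [h0]
        refine Tendsto.congr' ?_ tendsto_const_nhds
        filter_upwards [self_mem_nhdsWithin] with p hp
        rw [ENNReal.zero_rpow_of_pos (div_pos (hq.trans hp) hq)]
      · have := aux_tendsto_rpow h0 hfin.ne (l := 𝓝[>] q) (g := fun p => p / q) (a := 1)
          (by simpa [div_self hq.ne'] using
            ((continuous_id.div_const q).tendsto q).mono_left nhdsWithin_le_nhds)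
        simpa using this
    calc rieszV q K = liminf (fun p : ℝ => rieszV q K ^ (p / q)) (𝓝[>] q) :=
          (htends.liminf_eq).symm
      _ ≤ liminf (fun p : ℝ => rieszV p K) (𝓝[>] q) := by
          refine liminf_le_liminf ?_
          filter_upwards [self_mem_nhdsWithin] with p hp
          exact hlow p hp
  have htV : Tendsto (fun p : ℝ => rieszV p K) (𝓝[>] q) (𝓝 (rieszV q K)) :=
    tendsto_of_le_liminf_of_limsup_le hliminf hlimsup
  -- Step 5: positivity of `V_q`.
  have hdiam : EMetric.diam K ≠ ∞ := hK.isBounded.ediam_ne_top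
  have hpos : 0 < rieszV q K := by
    rw [← hach]
    have hdq : ∀ x y : EuclideanSpace ℝ (Fin n), x ∈ K → y ∈ K →
        EMetric.diam K ^ (-q) ≤ edist x y ^ (-q) := by
      intro x y hx hy
      rw [ENNReal.rpow_neg, ENNReal.rpow_neg]
      exact ENNReal.inv_le_inv.mpr
        (ENNReal.rpow_le_rpow (EMetric.edist_le_diam_of_mem hx hy) hq.le)
    have hb : EMetric.diam K ^ (-q) ≤ ∫⁻ x, ∫⁻ y, edist x y ^ (-q) ∂μq ∂μq := by
      have : EMetric.diam K ^ (-q) = ∫⁻ _x, EMetric.diam K ^ (-q) ∂μq := by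
        simp
      rw [this]
      refine lintegral_mono_ae ?_
      filter_upwards [hKae] with x hx
      have : EMetric.diam K ^ (-q) = ∫⁻ _y, EMetric.diam K ^ (-q) ∂μq := by
        simp
      rw [this]
      refine lintegral_mono_ae ?_
      filter_upwards [hKae] with y hy
      exact hdq x y hx hy
    refine lt_of_lt_of_le ?_ hb
    rw [ENNReal.rpow_neg]
    exact ENNReal.inv_pos.mpr (ENNReal.rpow_ne_top_of_nonneg hq.le hdiam)
  -- Step 6: capacity convergence.
  have hcap : Tendsto (fun p : ℝ => rieszCapPos p K) (𝓝[>] q) (𝓝 (rieszCapPos q K)) := by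
    have hEv0 : ∀ᶠ p in 𝓝[>] q, rieszV p K ≠ 0 := htV.eventually_ne hpos.ne'
    have hEvT : ∀ᶠ p in 𝓝[>] q, rieszV p K ≠ ∞ := htV.eventually_ne hfin.ne
    have hreal : Tendsto (fun p : ℝ => ((rieszV p K).toReal, -1 / p)) (𝓝[>] q)
        (𝓝 ((rieszV q K).toReal, -1 / q)) := by
      refine Tendsto.prodMk_nhds ((ENNReal.tendsto_toReal hfin.ne).comp htV) ?_
      exact ((continuousAt_const.div continuousAt_id hq.ne').tendsto).mono_left
        nhdsWithin_le_nhds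
    have hrpow := (Real.continuousAt_rpow ((rieszV q K).toReal, -1 / q)
      (Or.inl (ENNReal.toReal_pos hpos.ne' hfin.ne).ne')).tendsto.comp hreal
    have final := (ENNReal.continuous_ofReal.tendsto _).comp hrpow
    have hpt : ENNReal.ofReal ((rieszV q K).toReal ^ (-1 / q)) = rieszCapPos q K := by
      rw [rieszCapPos, aux_rpow_eq_ofReal hpos.ne' hfin.ne]
    rw [← hpt]
    refine Tendsto.congr' ?_ final
    filter_upwards [hEv0, hEvT] with p h0 hT
    simp only [Function.comp_def, rieszCapPos]
    exact (aux_rpow_eq_ofReal h0 hT _).symm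
  exact ⟨hlimsup, htV, hcap⟩
end

section
/- Right-continuity of capacity at p = 0 under an integrability hypothesis: let K ⊂ R^n be compact with positive logarithmic capacity, and suppose the logarithmic equilibrium measure μ₀ (the probability measure on K minimizing ∫∫ log(1/|x-y|) dμdμ) satisfies ∫∫ |x-y|^{-q_*} dμ₀ dμ₀ < ∞ for some q_* > 0. Then lim_{p↘0} Cap_p(K) = Cap_0(K), where Cap_0(K) = exp(−V_log(K)) and Cap_p(K) = V_p(K)^{-1/p} for p > 0. -/
open MeasureTheory ENNReal Filter Topology

lemma aux_rpow_neg_le {e : ℝ≥0∞} {p q : ℝ} (hp : 0 < p) (hpq : p ≤ q) :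
    e ^ (-p) ≤ 1 + e ^ (-q) := by
  rcases le_or_gt 1 e with h | h
  · have h1 : e ^ (-p) ≤ 1 := by
      simpa using ENNReal.rpow_le_rpow_of_exponent_le h (by linarith : -p ≤ (0:ℝ))
    exact h1.trans le_self_add
  · exact (ENNReal.rpow_le_rpow_of_exponent_ge h.le (by linarith)).trans le_add_self

lemma aux_exp_ratio_bound {p q t : ℝ} (hp : 0 < p) (hq : 0 < q) (hpq : p ≤ q / 2) :
    |(Real.exp (p * t) - 1) / p| ≤ |t| + 2 / q * Real.exp (q * t) := by
  rcases le_or_gt t 0 with ht | ht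
  · have h2 : 1 - Real.exp (p * t) ≤ -(p * t) := by nlinarith [Real.add_one_le_exp (p * t)]
    have hle1 : Real.exp (p * t) ≤ 1 := Real.exp_le_one_iff.mpr (mul_nonpos_of_nonneg_of_nonpos hp.le ht)
    have habs : |(Real.exp (p * t) - 1) / p| = (1 - Real.exp (p * t)) / p := by
      rw [abs_div, abs_of_pos hp, abs_of_nonpos (by linarith), neg_sub]
    have h3 : (1 - Real.exp (p * t)) / p ≤ -t := by rw [div_le_iff₀ hp]; nlinarith
    have hpos : 0 ≤ 2 / q * Real.exp (q * t) := by positivity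
    rw [habs]
    have := neg_le_abs t
    linarith
  · have hA1 : Real.exp (p * t) * Real.exp (-(p * t)) = 1 := by rw [← Real.exp_add]; simp
    have hB : -(p * t) + 1 ≤ Real.exp (-(p * t)) := Real.add_one_le_exp _
    have e1 : Real.exp (p * t) - 1 ≤ p * t * Real.exp (p * t) := by
      nlinarith [Real.exp_pos (p * t)]
    have e2 : Real.exp (p * t) ≤ Real.exp (q / 2 * t) := Real.exp_le_exp.mpr (by nlinarith)
    have e3 : q / 2 * t ≤ Real.exp (q / 2 * t) := by nlinarith [Real.add_one_le_exp (q / 2 * t)]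
    have e4 : t ≤ 2 / q * Real.exp (q / 2 * t) := by
      rw [div_mul_eq_mul_div, le_div_iff₀ hq]; nlinarith
    have eE : Real.exp (q / 2 * t) * Real.exp (q / 2 * t) = Real.exp (q * t) := by
      rw [← Real.exp_add]; ring_nf
    have habs : |(Real.exp (p * t) - 1) / p| = (Real.exp (p * t) - 1) / p := by
      refine abs_of_nonneg (div_nonneg ?_ hp.le)
      nlinarith [Real.one_le_exp (show (0:ℝ) ≤ p * t by positivity)]
    have key : (Real.exp (p * t) - 1) / p ≤ 2 / q * Real.exp (q * t) := by
      rw [div_le_iff₀ hp]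
      have s1 : p * t * Real.exp (p * t) ≤ p * (t * Real.exp (q / 2 * t)) := by
        have := mul_le_mul_of_nonneg_left e2 (by positivity : (0:ℝ) ≤ p * t)
        nlinarith [this]
      have s2 : t * Real.exp (q / 2 * t) ≤ 2 / q * Real.exp (q / 2 * t) * Real.exp (q / 2 * t) := by
        nlinarith [Real.exp_pos (q / 2 * t)]
      calc Real.exp (p * t) - 1 ≤ p * t * Real.exp (p * t) := e1
        _ ≤ p * (t * Real.exp (q / 2 * t)) := s1
        _ ≤ p * (2 / q * Real.exp (q / 2 * t) * Real.exp (q / 2 * t)) :=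
              mul_le_mul_of_nonneg_left s2 hp.le
        _ = 2 / q * Real.exp (q * t) * p := by rw [← eE]; ring
    rw [habs]
    have := abs_nonneg t
    linarith

lemma aux_energy_repr {n : ℕ}
    (m : Measure (EuclideanSpace ℝ (Fin n) × EuclideanSpace ℝ (Fin n)))
    [IsProbabilityMeasure m] {p : ℝ} (hp : 0 < p)
    (hfin : ∫⁻ z, edist z.1 z.2 ^ (-p) ∂m ≠ ⊤) :
    (∀ᵐ z ∂m, 0 < dist z.1 z.2) ∧
    Integrable (fun z => Real.exp (p * Real.log (1 / dist z.1 z.2))) m ∧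
    ∫⁻ z, edist z.1 z.2 ^ (-p) ∂m
      = ENNReal.ofReal (∫ z, Real.exp (p * Real.log (1 / dist z.1 z.2)) ∂m) := by
  have hmeas : Measurable fun z : EuclideanSpace ℝ (Fin n) × EuclideanSpace ℝ (Fin n) =>
      edist z.1 z.2 ^ (-p) := by measurability
  have hae0 : ∀ᵐ z ∂m, edist z.1 z.2 ^ (-p) < ⊤ := ae_lt_top hmeas hfin
  have haepos : ∀ᵐ z ∂m, 0 < dist z.1 z.2 := by
    filter_upwards [hae0] with z hz
    by_contra h
    have hd0 : dist z.1 z.2 = 0 := le_antisymm (not_lt.mp h) dist_nonneg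
    have he0 : edist z.1 z.2 = 0 := by rw [edist_dist, hd0]; simp
    rw [he0, ENNReal.zero_rpow_of_neg (by linarith)] at hz
    exact absurd hz (lt_irrefl ⊤)
  have haeq : ∀ᵐ z ∂m, edist z.1 z.2 ^ (-p)
      = ENNReal.ofReal (Real.exp (p * Real.log (1 / dist z.1 z.2))) := by
    filter_upwards [haepos] with z hz
    rw [edist_dist, ENNReal.ofReal_rpow_of_pos hz, Real.rpow_def_of_pos hz]
    congr 1
    rw [one_div, Real.log_inv]; ring
  have hg_meas : Measurable fun z : EuclideanSpace ℝ (Fin n) × EuclideanSpace ℝ (Fin n) =>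
      Real.exp (p * Real.log (1 / dist z.1 z.2)) := by measurability
  have hlin : ∫⁻ z, edist z.1 z.2 ^ (-p) ∂m
      = ∫⁻ z, ENNReal.ofReal (Real.exp (p * Real.log (1 / dist z.1 z.2))) ∂m :=
    lintegral_congr_ae haeq
  have hint : Integrable (fun z => Real.exp (p * Real.log (1 / dist z.1 z.2))) m := by
    refine ⟨hg_meas.aestronglyMeasurable, ?_⟩
    rw [hasFiniteIntegral_iff_ofReal (Filter.Eventually.of_forall fun z => (Real.exp_pos _).le)]
    rw [← hlin]
    exact hfin.lt_top
  exact ⟨haepos, hint,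
    hlin.trans (ofReal_integral_eq_lintegral_ofReal hint
      (Filter.Eventually.of_forall fun z => (Real.exp_pos _).le)).symm⟩

set_option maxHeartbeats 1000000 in
/-- Right-continuity of capacity at `p = 0` under an integrability
hypothesis: if `μ₀` is the logarithmic equilibrium measure of the compact set `K`
(a probability measure on `K` with finite logarithmic energy minimizing
`∫∫ log(1/|x-y|) dμdμ`, so `K` has positive logarithmic capacity), and
`∫∫ |x-y|^{-q_*} dμ₀dμ₀ < ∞` for some `q_* > 0`, then
`Cap_p(K) → Cap_0(K) = exp(-V_log(K))` as `p ↘ 0`. -/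
theorem rieszCap_right_continuous_at_zero {n : ℕ} (K : Set (EuclideanSpace ℝ (Fin n)))
    (hK : IsCompact K)
    (μ₀ : Measure (EuclideanSpace ℝ (Fin n))) [IsProbabilityMeasure μ₀]
    (hsupp : μ₀ Kᶜ = 0)
    (hInt : Integrable (fun z : EuclideanSpace ℝ (Fin n) × EuclideanSpace ℝ (Fin n) =>
        Real.log (1 / dist z.1 z.2)) (μ₀.prod μ₀))
    (hmin : ∀ ν : Measure (EuclideanSpace ℝ (Fin n)), IsProbabilityMeasure ν → ν Kᶜ = 0 →
      Integrable (fun z : EuclideanSpace ℝ (Fin n) × EuclideanSpace ℝ (Fin n) =>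
        Real.log (1 / dist z.1 z.2)) (ν.prod ν) →
      (∫ z, Real.log (1 / dist z.1 z.2) ∂(μ₀.prod μ₀))
        ≤ ∫ z, Real.log (1 / dist z.1 z.2) ∂(ν.prod ν))
    (qs : ℝ) (hqs : 0 < qs)
    (hdom : (∫⁻ x, ∫⁻ y, edist x y ^ (-qs) ∂μ₀ ∂μ₀) < ∞) :
    Tendsto (fun p : ℝ => rieszCapPos p K) (𝓝[>] 0)
      (𝓝 (ENNReal.ofReal
        (Real.exp (-∫ z, Real.log (1 / dist z.1 z.2) ∂(μ₀.prod μ₀))))) := by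
  have hf_meas : Measurable fun z : EuclideanSpace ℝ (Fin n) × EuclideanSpace ℝ (Fin n) =>
      Real.log (1 / dist z.1 z.2) := by measurability
  have hker : ∀ p : ℝ, Measurable fun z : EuclideanSpace ℝ (Fin n) × EuclideanSpace ℝ (Fin n) =>
      edist z.1 z.2 ^ (-p) := fun p => by measurability
  set I : ℝ := ∫ z, Real.log (1 / dist z.1 z.2) ∂(μ₀.prod μ₀) with hIdef
  -- finiteness of the energies of μ₀ for 0 < p ≤ qs
  have hLqs : (∫⁻ z, edist z.1 z.2 ^ (-qs) ∂(μ₀.prod μ₀)) ≠ ⊤ := by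
    rw [lintegral_prod _ (hker qs).aemeasurable]
    exact hdom.ne
  have hLfin : ∀ p ∈ Set.Ioc (0:ℝ) qs, (∫⁻ z, edist z.1 z.2 ^ (-p) ∂(μ₀.prod μ₀)) ≠ ⊤ := by
    intro p hp
    have hb : (∫⁻ z, edist z.1 z.2 ^ (-p) ∂(μ₀.prod μ₀))
        ≤ ∫⁻ z, (1 + edist z.1 z.2 ^ (-qs)) ∂(μ₀.prod μ₀) :=
      lintegral_mono fun z => aux_rpow_neg_le hp.1 hp.2
    refine ne_top_of_le_ne_top ?_ hb
    rw [lintegral_add_left measurable_const, lintegral_one, measure_univ]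
    exact ENNReal.add_ne_top.mpr ⟨ENNReal.one_ne_top, hLqs⟩
  set G : ℝ → ℝ := fun p => ∫ z, Real.exp (p * Real.log (1 / dist z.1 z.2)) ∂(μ₀.prod μ₀)
    with hGdef
  have hkey : ∀ p ∈ Set.Ioc (0:ℝ) qs,
      (∀ᵐ z ∂(μ₀.prod μ₀), 0 < dist z.1 z.2) ∧
      Integrable (fun z => Real.exp (p * Real.log (1 / dist z.1 z.2))) (μ₀.prod μ₀) ∧
      (∫⁻ z, edist z.1 z.2 ^ (-p) ∂(μ₀.prod μ₀)) = ENNReal.ofReal (G p) :=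
    fun p hp => aux_energy_repr _ hp.1 (hLfin p hp)
  obtain ⟨haepos, hexp_qs, -⟩ := hkey qs ⟨hqs, le_refl qs⟩
  -- Jensen for μ₀ gives positivity of G p
  have hjensen : ∀ p ∈ Set.Ioc (0:ℝ) qs, Real.exp (p * I) ≤ G p := by
    intro p hp
    obtain ⟨-, hexp, -⟩ := hkey p hp
    have h1 : Integrable (fun z => p * Real.log (1 / dist z.1 z.2)) (μ₀.prod μ₀) :=
      hInt.const_mul p
    have hgi : Integrable ((fun x => Real.exp x) ∘
        fun z : EuclideanSpace ℝ (Fin n) × EuclideanSpace ℝ (Fin n) =>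
          p * Real.log (1 / dist z.1 z.2)) (μ₀.prod μ₀) := hexp
    have h2 := convexOn_exp.map_integral_le Real.continuous_exp.continuousOn isClosed_univ
      (Filter.Eventually.of_forall fun z => Set.mem_univ _) h1 hgi
    rw [integral_const_mul] at h2
    exact h2
  have hGpos : ∀ p ∈ Set.Ioc (0:ℝ) qs, 0 < G p :=
    fun p hp => lt_of_lt_of_le (Real.exp_pos _) (hjensen p hp)
  have hpid : Tendsto (fun p : ℝ => p) (𝓝[>] (0:ℝ)) (𝓝 0) :=
    tendsto_id.mono_left nhdsWithin_le_nhds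
  -- derivative step
  have hderiv : Tendsto (fun p => (G p - 1) / p) (𝓝[>] (0:ℝ)) (𝓝 I) := by
    have hbound_int : Integrable (fun z : EuclideanSpace ℝ (Fin n) × EuclideanSpace ℝ (Fin n) =>
        |Real.log (1 / dist z.1 z.2)| + 2 / qs * Real.exp (qs * Real.log (1 / dist z.1 z.2)))
        (μ₀.prod μ₀) := hInt.abs.add (hexp_qs.const_mul _)
    have hmain := tendsto_integral_filter_of_dominated_convergence
      (μ := μ₀.prod μ₀) (l := 𝓝[>] (0:ℝ))
      (F := fun p z => (Real.exp (p * Real.log (1 / dist z.1 z.2)) - 1) / p)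
      (f := fun z => Real.log (1 / dist z.1 z.2))
      (fun z => |Real.log (1 / dist z.1 z.2)| + 2 / qs * Real.exp (qs * Real.log (1 / dist z.1 z.2)))
      (Filter.Eventually.of_forall fun p =>
        (((Real.measurable_exp.comp (hf_meas.const_mul p)).sub measurable_const).div_const
          p).aestronglyMeasurable)
      (by
        filter_upwards [Ioc_mem_nhdsGT_of_mem ⟨le_refl (0:ℝ), half_pos hqs⟩] with p hp
        refine Filter.Eventually.of_forall fun z => ?_
        rw [Real.norm_eq_abs]
        exact aux_exp_ratio_bound hp.1 hqs hp.2)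
      hbound_int
      (Filter.Eventually.of_forall fun z => by
        have hD : HasDerivAt (fun p : ℝ => Real.exp (p * Real.log (1 / dist z.1 z.2)))
            (Real.log (1 / dist z.1 z.2)) 0 := by
          have := ((hasDerivAt_id (0:ℝ)).mul_const (Real.log (1 / dist z.1 z.2))).exp
          simpa using this
        have := hasDerivAt_iff_tendsto_slope.mp hD
        refine (this.mono_left (nhdsWithin_mono _ ?_)).congr fun p => ?_
        · intro x hx
          exact ne_of_gt hx
        · simp [slope_def_field])
    refine hmain.congr' ?_
    filter_upwards [Ioc_mem_nhdsGT_of_mem ⟨le_refl (0:ℝ), hqs⟩] with p hp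
    obtain ⟨-, hexp, -⟩ := hkey p hp
    rw [integral_div, integral_sub hexp (integrable_const 1), integral_const, probReal_univ]
    simp [hGdef]
  -- G p - 1 → 0
  have hu0 : Tendsto (fun p => G p - 1) (𝓝[>] (0:ℝ)) (𝓝 0) := by
    have h := hpid.mul hderiv
    rw [zero_mul] at h
    refine h.congr' ?_
    filter_upwards [self_mem_nhdsWithin] with p hp
    exact mul_div_cancel₀ _ (ne_of_gt hp)
  have husmall : ∀ᶠ p in 𝓝[>] (0:ℝ), |G p - 1| ≤ 1 / 2 := by
    have := (NormedAddCommGroup.tendsto_nhds_zero.mp hu0) (1/2) (by norm_num)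
    filter_upwards [this] with p hp
    rw [Real.norm_eq_abs] at hp
    exact hp.le
  -- log step
  have hlog : Tendsto (fun p => Real.log (G p) / p) (𝓝[>] (0:ℝ)) (𝓝 I) := by
    have herr : Tendsto (fun p => Real.log (G p) / p - (G p - 1) / p) (𝓝[>] (0:ℝ)) (𝓝 0) := by
      refine squeeze_zero_norm' (a := fun p => 2 * p * ((G p - 1) / p) ^ 2) ?_ ?_
      · filter_upwards [Ioc_mem_nhdsGT_of_mem ⟨le_refl (0:ℝ), hqs⟩, husmall] with p hp hu
        have hp0 : 0 < p := hp.1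
        have hx : |(-(G p - 1))| < 1 := by rw [abs_neg]; linarith [hu]
        have hGp : 1 - -(G p - 1) = G p := by ring
        have habs : |(-(G p - 1))| = |G p - 1| := abs_neg _
        have hest := Real.abs_log_sub_add_sum_range_le hx 1
        have hest' : |1 - G p + Real.log (G p)| ≤ (1 - G p) ^ 2 / (1 - |1 - G p|) := by
          simpa [Finset.sum_range_one, hGp, habs] using hest
        have habs2 : |1 - G p| = |G p - 1| := abs_sub_comm 1 (G p)
        have h1 : |Real.log (G p) - (G p - 1)| ≤ 2 * (G p - 1) ^ 2 := by
          have he : Real.log (G p) - (G p - 1) = 1 - G p + Real.log (G p) := by ring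
          rw [he]
          refine hest'.trans ?_
          rw [habs2]
          have hden : (1:ℝ)/2 ≤ 1 - |G p - 1| := by linarith
          calc (1 - G p) ^ 2 / (1 - |G p - 1|) ≤ (1 - G p) ^ 2 / (1/2) :=
                div_le_div_of_nonneg_left (by positivity) (by norm_num) hden
            _ = 2 * (G p - 1) ^ 2 := by ring
        rw [Real.norm_eq_abs]
        have heq : Real.log (G p) / p - (G p - 1) / p = (Real.log (G p) - (G p - 1)) / p := by
          ring
        rw [heq, abs_div, abs_of_pos hp0]
        have heq2 : 2 * p * ((G p - 1) / p) ^ 2 = 2 * (G p - 1) ^ 2 / p := by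
          field_simp
        rw [heq2]
        gcongr
      · have h := (tendsto_const_nhds (x := (2:ℝ))).mul (hpid.mul (hderiv.pow 2))
        simpa [mul_assoc] using h
    have h := hderiv.add herr
    rw [add_zero] at h
    refine h.congr fun p => ?_
    ring
  -- tendsto of the lower comparison function
  have hlowten : Tendsto (fun p => ENNReal.ofReal (Real.exp (-(Real.log (G p) / p))))
      (𝓝[>] (0:ℝ)) (𝓝 (ENNReal.ofReal (Real.exp (-I)))) :=
    (ENNReal.continuous_ofReal.tendsto _).comp ((Real.continuous_exp.tendsto _).comp hlog.neg)
  -- lower bound for the capacity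
  have hlb : ∀ᶠ p in 𝓝[>] (0:ℝ),
      ENNReal.ofReal (Real.exp (-(Real.log (G p) / p))) ≤ rieszCapPos p K := by
    filter_upwards [Ioc_mem_nhdsGT_of_mem ⟨le_refl (0:ℝ), hqs⟩] with p hp
    unfold rieszCapPos
    obtain ⟨-, -, hrepr⟩ := hkey p hp
    have hV : rieszV p K ≤ ENNReal.ofReal (G p) := by
      refine iInf_le_of_le μ₀ (iInf_le_of_le inferInstance (iInf_le_of_le hsupp ?_))
      rw [show (∫⁻ x, ∫⁻ y, edist x y ^ (-p) ∂μ₀ ∂μ₀)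
          = ∫⁻ z, edist z.1 z.2 ^ (-p) ∂(μ₀.prod μ₀) from
        (lintegral_prod _ (hker p).aemeasurable).symm]
      exact le_of_eq hrepr
    have hmono : (ENNReal.ofReal (G p)) ^ (-1/p) ≤ rieszV p K ^ (-1/p) := by
      rw [neg_div, ENNReal.rpow_neg, ENNReal.rpow_neg]
      exact ENNReal.inv_le_inv.mpr (ENNReal.rpow_le_rpow hV (one_div_pos.mpr hp.1).le)
    refine le_trans (le_of_eq ?_) hmono
    rw [ENNReal.ofReal_rpow_of_pos (hGpos p hp), Real.rpow_def_of_pos (hGpos p hp)]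
    congr 1
    ring
  -- upper bound for the capacity
  have hub : ∀ᶠ p in 𝓝[>] (0:ℝ), rieszCapPos p K ≤ ENNReal.ofReal (Real.exp (-I)) := by
    filter_upwards [Ioc_mem_nhdsGT_of_mem ⟨le_refl (0:ℝ), hqs⟩] with p hp
    unfold rieszCapPos
    have hVge : ENNReal.ofReal (Real.exp (p * I)) ≤ rieszV p K := by
      refine le_iInf fun ν => le_iInf fun hν => le_iInf fun hνK => ?_
      haveI := hν
      rw [show (∫⁻ x, ∫⁻ y, edist x y ^ (-p) ∂ν ∂ν)
          = ∫⁻ z, edist z.1 z.2 ^ (-p) ∂(ν.prod ν) from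
        (lintegral_prod _ (hker p).aemeasurable).symm]
      by_cases hA : (∫⁻ z, edist z.1 z.2 ^ (-p) ∂(ν.prod ν)) = ⊤
      · rw [hA]; exact le_top
      · obtain ⟨hν_pos, hν_exp, hν_repr⟩ := aux_energy_repr (ν.prod ν) hp.1 hA
        have hKKnull : (ν.prod ν) (K ×ˢ K)ᶜ = 0 := by
          rw [Set.compl_prod_eq_union]
          exact measure_union_null (by rw [Measure.prod_prod, hνK, zero_mul])
            (by rw [Measure.prod_prod, hνK, mul_zero])
        have hKK : ∀ᵐ z ∂(ν.prod ν), z ∈ K ×ˢ K := by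
          rw [ae_iff]
          exact hKKnull
        have hfint : Integrable (fun z : EuclideanSpace ℝ (Fin n) × EuclideanSpace ℝ (Fin n) =>
            Real.log (1 / dist z.1 z.2)) (ν.prod ν) := by
          refine Integrable.mono'
            ((hν_exp.const_mul p⁻¹).add (integrable_const |Real.log (Metric.diam K)|))
            hf_meas.aestronglyMeasurable ?_
          filter_upwards [hν_pos, hKK] with z hz hzK
          rw [Real.norm_eq_abs]
          rcases le_or_gt 0 (Real.log (1 / dist z.1 z.2)) with h | h
          · have h1 : p * Real.log (1 / dist z.1 z.2)
                ≤ Real.exp (p * Real.log (1 / dist z.1 z.2)) := by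
              nlinarith [Real.add_one_le_exp (p * Real.log (1 / dist z.1 z.2))]
            have h2 : Real.log (1 / dist z.1 z.2)
                ≤ p⁻¹ * Real.exp (p * Real.log (1 / dist z.1 z.2)) := by
              rw [inv_mul_eq_div, le_div_iff₀ hp.1]
              nlinarith [h1]
            rw [abs_of_nonneg h]
            simp only [Pi.add_apply]
            linarith [abs_nonneg (Real.log (Metric.diam K))]
          · rw [abs_of_neg h]
            have hneg : -Real.log (1 / dist z.1 z.2) = Real.log (dist z.1 z.2) := by
              rw [one_div, Real.log_inv]; ring
            have hdD : dist z.1 z.2 ≤ Metric.diam K :=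
              Metric.dist_le_diam_of_mem hK.isBounded hzK.1 hzK.2
            have h4 : Real.log (dist z.1 z.2) ≤ Real.log (Metric.diam K) :=
              Real.log_le_log hz hdD
            have h6 : 0 ≤ p⁻¹ * Real.exp (p * Real.log (1 / dist z.1 z.2)) :=
              mul_nonneg (inv_nonneg.mpr hp.1.le) (Real.exp_pos _).le
            rw [hneg]
            simp only [Pi.add_apply]
            linarith [le_abs_self (Real.log (Metric.diam K))]
        have hmin' := hmin ν hν hνK hfint
        have hgi : Integrable ((fun x => Real.exp x) ∘
            fun z : EuclideanSpace ℝ (Fin n) × EuclideanSpace ℝ (Fin n) =>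
              p * Real.log (1 / dist z.1 z.2)) (ν.prod ν) := hν_exp
        have hjen := convexOn_exp.map_integral_le Real.continuous_exp.continuousOn isClosed_univ
          (Filter.Eventually.of_forall fun z => Set.mem_univ _) (hfint.const_mul p) hgi
        rw [integral_const_mul] at hjen
        rw [hν_repr]
        refine ENNReal.ofReal_le_ofReal (le_trans ?_ hjen)
        exact Real.exp_le_exp.mpr (mul_le_mul_of_nonneg_left hmin' hp.1.le)
    have hmono : rieszV p K ^ (-1/p) ≤ (ENNReal.ofReal (Real.exp (p * I))) ^ (-1/p) := by
      rw [neg_div, ENNReal.rpow_neg, ENNReal.rpow_neg]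
      exact ENNReal.inv_le_inv.mpr (ENNReal.rpow_le_rpow hVge (one_div_pos.mpr hp.1).le)
    refine le_trans hmono (le_of_eq ?_)
    rw [ENNReal.ofReal_rpow_of_pos (Real.exp_pos _), Real.rpow_def_of_pos (Real.exp_pos _),
      Real.log_exp]
    congr 1
    field_simp [hp.1.ne']
  exact tendsto_of_tendsto_of_tendsto_of_le_of_le' hlowten tendsto_const_nhds hlb hub
end
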